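/- arXiv:1112.3128 — 4 statements merged into one kernel-verified Lean document; each statement's English description precedes it below -/
import Mathlib

section
/- Let Π^eu denote {x ∈ Π_{i∈I} H_i : ‖x_i‖ = 1 for all but finitely many i ∈ I}. Let K be a complex inner product space and let Φ : Π^eu → K satisfy: (multilinearity) for every x ∈ Π^eu, i₀ ∈ I, c ∈ ℂ and v, w ∈ H_{i₀}, Φ(Function.update x i₀ (c•v + w)) = c•Φ(Function.update x i₀ v) + Φ(Function.update x i₀ w); and (componentwise inner-product preservation) for all x, y ∈ Π^eu, ⟪Φ(x), Φ(y)⟫_K = ∏_{i∈I} ⟪x_i, y_i⟫ (a finite product, as finprod) if x ∼ y, and ⟪Φ(x), Φ(y)⟫_K = 0 if x ≁ y. Then there is a unique ℂ-linear map Φ̃ : ⨂^un_{i∈I} H_i → K with Φ̃(⊗x) = Φ(x) for every x ∈ Π^eu; moreover, for any map B : (⨂^un_{i∈I} H_i) × (⨂^un_{i∈I} H_i) → ℂ that is conjugate-ℂ-linear in the first variable, ℂ-linear in the second, and satisfies B(⊗x, ⊗y) = h(x,y) whenever ‖x_i‖ = ‖y_i‖ = 1 for every i, one has ⟪Φ̃(ξ),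 Φ̃(η)⟫_K = B(ξ, η) for all ξ, η ∈ ⨂^un_{i∈I} H_i (Φ̃ is an isometry). -/
open scoped TensorProduct Classical ComplexConjugate

/-- The form `h(x,y)`: the (finite) product `∏_{i∈I} ⟪x_i, y_i⟫` when `⟪x_i, y_i⟫ = 1` for
all but finitely many `i`, and `0` otherwise. -/
noncomputable def hform {I : Type*} (H : I → Type*) [∀ i, NormedAddCommGroup (H i)]
    [∀ i, InnerProductSpace ℂ (H i)] (x y : ∀ i, H i) : ℂ :=
  if {i | (inner ℂ (x i) (y i) : ℂ) ≠ 1}.Finite then ∏ᶠ i, (inner ℂ (x i) (y i) : ℂ) else 0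

/-- `⨂^un_{i∈I} H_i`: the span in `⨂_{i∈I} H_i` of the elementary tensors of families of
unit vectors. -/
noncomputable def unTensorSpan {I : Type*} (H : I → Type*) [∀ i, NormedAddCommGroup (H i)]
    [∀ i, InnerProductSpace ℂ (H i)] : Submodule ℂ (⨂[ℂ] i, H i) :=
  Submodule.span ℂ {t | ∃ x : ∀ i, H i, (∀ i, ‖x i‖ = 1) ∧ t = PiTensorProduct.tprod ℂ x}

/-- Universal property of `⨂^un_{i∈I} H_i`: every componentwise inner-product preserving
multilinear map `Φ` on the eventually-unit families factors uniquely through a linear map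
`Φ̃` on `⨂^un_{i∈I} H_i`, and `Φ̃` is an isometry for any sesquilinear form `B` extending `h`. -/
theorem unTensorSpan_universal_property {I : Type*} [Infinite I] [DecidableEq I]
    (H : I → Type*) [∀ i, NormedAddCommGroup (H i)] [∀ i, InnerProductSpace ℂ (H i)]
    (K : Type*) [NormedAddCommGroup K] [InnerProductSpace ℂ K]
    (Φ : (∀ i, H i) → K)
    (hmul : ∀ x : ∀ i, H i, {i | ‖x i‖ ≠ 1}.Finite →
      ∀ (i₀ : I) (c : ℂ) (v w : H i₀),
        Φ (Function.update x i₀ (c • v + w)) =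
          c • Φ (Function.update x i₀ v) + Φ (Function.update x i₀ w))
    (hip : ∀ x y : ∀ i, H i, {i | ‖x i‖ ≠ 1}.Finite → {i | ‖y i‖ ≠ 1}.Finite →
      ({i | x i ≠ y i}.Finite →
        (inner ℂ (Φ x) (Φ y) : ℂ) = ∏ᶠ i, (inner ℂ (x i) (y i) : ℂ)) ∧
      (¬ {i | x i ≠ y i}.Finite → (inner ℂ (Φ x) (Φ y) : ℂ) = 0)) :
    (∃! Φt : unTensorSpan H →ₗ[ℂ] K,
      ∀ x : ∀ i, H i, {i | ‖x i‖ ≠ 1}.Finite →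
        ∀ h : PiTensorProduct.tprod ℂ x ∈ unTensorSpan H,
          Φt ⟨PiTensorProduct.tprod ℂ x, h⟩ = Φ x) ∧
    (∀ Φt : unTensorSpan H →ₗ[ℂ] K,
      (∀ x : ∀ i, H i, {i | ‖x i‖ ≠ 1}.Finite →
        ∀ h : PiTensorProduct.tprod ℂ x ∈ unTensorSpan H,
          Φt ⟨PiTensorProduct.tprod ℂ x, h⟩ = Φ x) →
      ∀ B : unTensorSpan H → unTensorSpan H → ℂ,
        (∀ ξ ξ' η : unTensorSpan H, B (ξ + ξ') η = B ξ η + B ξ' η) →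
        (∀ (c : ℂ) (ξ η : unTensorSpan H), B (c • ξ) η = conj c * B ξ η) →
        (∀ ξ η η' : unTensorSpan H, B ξ (η + η') = B ξ η + B ξ η') →
        (∀ (c : ℂ) (ξ η : unTensorSpan H), B ξ (c • η) = c * B ξ η) →
        (∀ (x y : ∀ i, H i) (hx : ∀ i, ‖x i‖ = 1) (hy : ∀ i, ‖y i‖ = 1)
          (hmx : PiTensorProduct.tprod ℂ x ∈ unTensorSpan H)
          (hmy : PiTensorProduct.tprod ℂ y ∈ unTensorSpan H),
          B ⟨PiTensorProduct.tprod ℂ x, hmx⟩ ⟨PiTensorProduct.tprod ℂ y, hmy⟩ =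
            hform H x y) →
        ∀ ξ η : unTensorSpan H, (inner ℂ (Φt ξ) (Φt η) : ℂ) = B ξ η) := by
  
  rename_i iInf iDec i3 i2 i1 i0
  classical
  set Φ' : (∀ i, H i) → K := fun x => if {i | ‖x i‖ ≠ 1}.Finite then Φ x else 0 with hΦ'def
  have hΦ'eq : ∀ x : ∀ i, H i, {i | ‖x i‖ ≠ 1}.Finite → Φ' x = Φ x := by
    intro x hx; simp [hΦ'def, hx]
  have hΦ'eq0 : ∀ x : ∀ i, H i, ¬ {i | ‖x i‖ ≠ 1}.Finite → Φ' x = 0 := by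
    intro x hx; simp [hΦ'def, hx]
  -- finiteness of the non-unit set for an update is independent of the value
  have hfin_update : ∀ (x : ∀ i, H i) (i₀ : I) (u u' : H i₀),
      {i | ‖Function.update x i₀ u i‖ ≠ 1}.Finite →
      {i | ‖Function.update x i₀ u' i‖ ≠ 1}.Finite := by
    intro x i₀ u u' h
    apply Set.Finite.subset (h.union (Set.finite_singleton i₀))
    intro i hi
    by_cases hii : i = i₀
    · exact Or.inr hii
    · left
      simpa [Function.update_of_ne hii] using
        (by simpa [Function.update_of_ne hii] using hi : ‖x i‖ ≠ 1)
  -- Φ of an update by 0 vanishes (on eventually-unit families)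
  have hzero : ∀ (x : ∀ i, H i) (i₀ : I),
      {i | ‖Function.update x i₀ (0 : H i₀) i‖ ≠ 1}.Finite →
      Φ (Function.update x i₀ (0 : H i₀)) = 0 := by
    intro x i₀ hfin
    have h := hmul (Function.update x i₀ (0 : H i₀)) hfin i₀ 1 0 0
    simp only [Function.update_idem, one_smul, add_zero] at h
    exact left_eq_add.mp h
  -- Φ' is fully multilinear
  have hmul' : ∀ (x : ∀ i, H i) (i₀ : I) (c : ℂ) (v w : H i₀),
      Φ' (Function.update x i₀ (c • v + w)) =
        c • Φ' (Function.update x i₀ v) + Φ' (Function.update x i₀ w) := by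
    intro x i₀ c v w
    by_cases hfin : {i | ‖Function.update x i₀ v i‖ ≠ 1}.Finite
    · have h1 : {i | ‖Function.update x i₀ (c • v + w) i‖ ≠ 1}.Finite :=
        hfin_update x i₀ v _ hfin
      have h2 : {i | ‖Function.update x i₀ w i‖ ≠ 1}.Finite :=
        hfin_update x i₀ v _ hfin
      rw [hΦ'eq _ h1, hΦ'eq _ hfin, hΦ'eq _ h2]
      have := hmul (Function.update x i₀ v) hfin i₀ c v w
      simpa only [Function.update_idem] using this
    · have h1 : ¬ {i | ‖Function.update x i₀ (c • v + w) i‖ ≠ 1}.Finite := by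
        intro h; exact hfin (hfin_update x i₀ _ _ h)
      have h2 : ¬ {i | ‖Function.update x i₀ w i‖ ≠ 1}.Finite := by
        intro h; exact hfin (hfin_update x i₀ _ _ h)
      rw [hΦ'eq0 _ h1, hΦ'eq0 _ hfin, hΦ'eq0 _ h2]
      simp
  have hzero' : ∀ (x : ∀ i, H i) (i₀ : I),
      Φ' (Function.update x i₀ (0 : H i₀)) = 0 := by
    intro x i₀
    by_cases hfin : {i | ‖Function.update x i₀ (0 : H i₀) i‖ ≠ 1}.Finite
    · rw [hΦ'eq _ hfin]; exact hzero x i₀ hfin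
    · exact hΦ'eq0 _ hfin
  -- package Φ' as a multilinear map
  set M : MultilinearMap ℂ H K :=
    { toFun := Φ'
      map_update_add' := by
        intro d x i₀ v w
        rw [Subsingleton.elim d iDec]
        have := hmul' x i₀ 1 v w
        simpa using this
      map_update_smul' := by
        intro d x i₀ c v
        rw [Subsingleton.elim d iDec]
        have := hmul' x i₀ c v 0
        simpa [hzero' x i₀] using this } with hMdef
  set Φt₀ : unTensorSpan H →ₗ[ℂ] K :=
    (PiTensorProduct.lift M).comp (unTensorSpan H).subtype with hΦt₀def
  have hΦt₀ : ∀ x : ∀ i, H i, {i | ‖x i‖ ≠ 1}.Finite →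
      ∀ h : PiTensorProduct.tprod ℂ x ∈ unTensorSpan H,
        Φt₀ ⟨PiTensorProduct.tprod ℂ x, h⟩ = Φ x := by
    intro x hx h
    have : Φt₀ ⟨PiTensorProduct.tprod ℂ x, h⟩ = PiTensorProduct.lift M (PiTensorProduct.tprod ℂ x) := rfl
    rw [this, PiTensorProduct.lift.tprod]
    rw [hMdef]
    exact hΦ'eq x hx
  -- uniqueness: two such maps agree
  have huniq : ∀ Φt₁ Φt₂ : unTensorSpan H →ₗ[ℂ] K,
      (∀ x : ∀ i, H i, {i | ‖x i‖ ≠ 1}.Finite →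
        ∀ h : PiTensorProduct.tprod ℂ x ∈ unTensorSpan H,
          Φt₁ ⟨PiTensorProduct.tprod ℂ x, h⟩ = Φ x) →
      (∀ x : ∀ i, H i, {i | ‖x i‖ ≠ 1}.Finite →
        ∀ h : PiTensorProduct.tprod ℂ x ∈ unTensorSpan H,
          Φt₂ ⟨PiTensorProduct.tprod ℂ x, h⟩ = Φ x) → Φt₁ = Φt₂ := by
    intro Φt₁ Φt₂ h1 h2
    ext ξ
    obtain ⟨t, ht⟩ := ξ
    induction ht using Submodule.span_induction with
    | mem t h =>
      obtain ⟨x, hx, rfl⟩ := h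
      have hxfin : {i | ‖x i‖ ≠ 1}.Finite := by
        convert Set.finite_empty
        ext i; simp [hx i]
      exact (h1 x hxfin _).trans (h2 x hxfin _).symm
    | zero =>
      have hz : (⟨0, Submodule.zero_mem _⟩ : unTensorSpan H) = 0 := rfl
      rw [hz, map_zero, map_zero]
    | add u v hu hv ihu ihv =>
      have : (⟨u + v, Submodule.add_mem _ hu hv⟩ : unTensorSpan H) =
          ⟨u, hu⟩ + ⟨v, hv⟩ := rfl
      rw [this, map_add, map_add, ihu, ihv]
    | smul c u hu ihu =>
      have : (⟨c • u, Submodule.smul_mem _ c hu⟩ : unTensorSpan H) =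
          c • (⟨u, hu⟩ : unTensorSpan H) := rfl
      rw [this, map_smul, map_smul, ihu]
  constructor
  · exact ⟨Φt₀, hΦt₀, fun Φt hΦt => huniq Φt Φt₀ hΦt hΦt₀⟩
  · intro Φt hΦt B Badd₁ Bsmul₁ Badd₂ Bsmul₂ Bgen ξ η
    -- first: the key generator identity
    have key : ∀ (x y : ∀ i, H i), (∀ i, ‖x i‖ = 1) → (∀ i, ‖y i‖ = 1) →
        (inner ℂ (Φ x) (Φ y) : ℂ) = hform H x y := by
      intro x y hx hy
      have hxfin : {i | ‖x i‖ ≠ 1}.Finite := by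
        convert Set.finite_empty; ext i; simp [hx i]
      have hyfin : {i | ‖y i‖ ≠ 1}.Finite := by
        convert Set.finite_empty; ext i; simp [hy i]
      have hset : {i | (inner ℂ (x i) (y i) : ℂ) ≠ 1} = {i | x i ≠ y i} := by
        ext i
        simp only [Set.mem_setOf_eq, not_iff_not]
        exact inner_eq_one_iff_of_norm_eq_one (hx i) (hy i)
      obtain ⟨hc1, hc2⟩ := hip x y hxfin hyfin
      by_cases hf : {i | x i ≠ y i}.Finite
      · rw [hc1 hf, hform, if_pos (hset ▸ hf)]
      · rw [hc2 hf, hform, if_neg (by rw [hset]; exact hf)]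
    -- inner for fixed unit-generator ξ, span induction on η
    have step1 : ∀ (x : ∀ i, H i) (hx : ∀ i, ‖x i‖ = 1)
        (hmx : PiTensorProduct.tprod ℂ x ∈ unTensorSpan H) (η : unTensorSpan H),
        (inner ℂ (Φt ⟨PiTensorProduct.tprod ℂ x, hmx⟩) (Φt η) : ℂ) =
          B ⟨PiTensorProduct.tprod ℂ x, hmx⟩ η := by
      intro x hx hmx η
      obtain ⟨t, ht⟩ := η
      induction ht using Submodule.span_induction with
      | mem t h =>
        obtain ⟨y, hy, rfl⟩ := h
        have hxfin : {i | ‖x i‖ ≠ 1}.Finite := by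
          convert Set.finite_empty; ext i; simp [hx i]
        have hyfin : {i | ‖y i‖ ≠ 1}.Finite := by
          convert Set.finite_empty; ext i; simp [hy i]
        rw [hΦt x hxfin hmx]
        exact ((congrArg _ (hΦt y hyfin _)).trans (key x y hx hy)).trans (Bgen x y hx hy hmx _).symm
      | zero =>
        have hz : (⟨0, Submodule.zero_mem _⟩ : unTensorSpan H) = (0 : ℂ) • 0 := by
          simp
        rw [hz, map_smul, Bsmul₂]
        simp
      | add u v hu hv ihu ihv =>
        have : (⟨u + v, Submodule.add_mem _ hu hv⟩ : unTensorSpan H) =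
            ⟨u, hu⟩ + ⟨v, hv⟩ := rfl
        rw [this, map_add, inner_add_right, Badd₂, ihu, ihv]
      | smul c u hu ihu =>
        have : (⟨c • u, Submodule.smul_mem _ c hu⟩ : unTensorSpan H) =
            c • (⟨u, hu⟩ : unTensorSpan H) := rfl
        rw [this, map_smul, inner_smul_right, Bsmul₂, ihu]
    -- span induction on ξ
    obtain ⟨t, ht⟩ := ξ
    induction ht using Submodule.span_induction with
    | mem t h =>
      obtain ⟨x, hx, rfl⟩ := h
      exact step1 x hx _ η
    | zero =>
      have hz : (⟨0, Submodule.zero_mem _⟩ : unTensorSpan H) = (0 : ℂ) • 0 := by simp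
      rw [hz, map_smul, Bsmul₁]
      simp
    | add u v hu hv ihu ihv =>
      have : (⟨u + v, Submodule.add_mem _ hu hv⟩ : unTensorSpan H) =
          ⟨u, hu⟩ + ⟨v, hv⟩ := rfl
      rw [this, map_add, inner_add_left, Badd₁, ihu, ihv]
    | smul c u hu ihu =>
      have : (⟨c • u, Submodule.smul_mem _ c hu⟩ : unTensorSpan H) =
          c • (⟨u, hu⟩ : unTensorSpan H) := rfl
      rw [this, map_smul, inner_smul_left, Bsmul₁, ihu]
end

section
/- Let (H_i)_{i∈I} be complex Hilbert spaces, let F ⊆ I be a finite subset, and for each i ∈ I let T_i : H_i →L[ℂ] H_i be a continuous linear operator such that T_i is unitary (T_i† ∘ T_i = 1 = T_i ∘ T_i†, where † is the Hilbert-space adjoint) for every i ∈ I∖F. Let M : ⨂_{i∈I} H_i → ⨂_{i∈I} H_i be the linear map induced by the family (T_i) (PiTensorProduct.map, so M(⊗x) = ⊗(T_i(x_i))), and let B be any map on (⨂^un_{i∈I} H_i) × (⨂^un_{i∈I} H_i) with values in ℂ that is conjugate-ℂ-linear in the first variable, ℂ-linear in the second, and satisfies B(⊗x, ⊗y) = h(x,y)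 whenever ‖x_i‖ = ‖y_i‖ = 1 for every i. Then: (i) M maps ⨂^un_{i∈I} H_i into itself; (ii) for every ξ ∈ ⨂^un_{i∈I} H_i, B(M(ξ), M(ξ)).re ≤ (∏_{i∈F} ‖T_i‖²)·B(ξ, ξ).re; and (iii) for all ξ, η ∈ ⨂^un_{i∈I} H_i, B(M(ξ), η) = B(ξ, M†(η)), where M† is the linear map induced by the family of adjoints (T_i†). -/
open scoped TensorProduct Classical ComplexConjugate ComplexOrder

namespace PTMOBaux

/-! ### Gram-like matrices -/

/-- A matrix is Gram-like if it is the Gram matrix of a family of vectors in some `ℂ^m`. -/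
def GramLike {n : ℕ} (M : Matrix (Fin n) (Fin n) ℂ) : Prop :=
  ∃ (m : ℕ) (w : Fin n → Fin m → ℂ), ∀ k l, M k l = ∑ a, conj (w k a) * w l a

variable {n : ℕ}

lemma GramLike.qf_nonneg {M : Matrix (Fin n) (Fin n) ℂ} (h : GramLike M) (c : Fin n → ℂ) :
    0 ≤ (∑ k, ∑ l, conj (c k) * c l * M k l).re := by
  obtain ⟨m, w, hw⟩ := h
  have key : (∑ k, ∑ l, conj (c k) * c l * M k l)
      = ∑ a, conj (∑ k, c k * w k a) * (∑ l, c l * w l a) := by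
    calc (∑ k, ∑ l, conj (c k) * c l * M k l)
        = ∑ k, ∑ a, ∑ l, conj (c k * w k a) * (c l * w l a) := by
          refine Finset.sum_congr rfl fun k _ => ?_
          rw [Finset.sum_comm]
          refine Finset.sum_congr rfl fun l _ => ?_
          rw [hw k l, Finset.mul_sum]
          refine Finset.sum_congr rfl fun a _ => ?_
          simp only [map_mul]; ring
      _ = ∑ a, ∑ k, conj (c k * w k a) * ∑ l, c l * w l a := by
          rw [Finset.sum_comm]
          refine Finset.sum_congr rfl fun a _ => ?_
          refine Finset.sum_congr rfl fun k _ => ?_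
          rw [Finset.mul_sum]
      _ = ∑ a, conj (∑ k, c k * w k a) * (∑ l, c l * w l a) := by
          refine Finset.sum_congr rfl fun a _ => ?_
          rw [map_sum, Finset.sum_mul]
  rw [key, Complex.re_sum]
  refine Finset.sum_nonneg fun a _ => ?_
  rw [mul_comm, Complex.mul_conj]
  exact_mod_cast Complex.normSq_nonneg _

lemma GramLike.mul {M N : Matrix (Fin n) (Fin n) ℂ} (hM : GramLike M) (hN : GramLike N) :
    GramLike (Matrix.of fun k l => M k l * N k l) := by
  obtain ⟨m₁, w₁, hw₁⟩ := hM
  obtain ⟨m₂, w₂, hw₂⟩ := hN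
  refine ⟨m₁ * m₂, fun k a => w₁ k (finProdFinEquiv.symm a).1 * w₂ k (finProdFinEquiv.symm a).2,
    fun k l => ?_⟩
  rw [Matrix.of_apply, hw₁, hw₂, Finset.sum_mul_sum]
  have hpt : (∑ p : Fin m₁ × Fin m₂,
      (conj (w₁ k p.1) * w₁ l p.1) * (conj (w₂ k p.2) * w₂ l p.2))
      = ∑ i, ∑ j, (conj (w₁ k i) * w₁ l i) * (conj (w₂ k j) * w₂ l j) :=
    Fintype.sum_prod_type _
  rw [← hpt]
  refine Fintype.sum_equiv finProdFinEquiv _ _ fun p => ?_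
  simp only [map_mul, Equiv.symm_apply_apply]
  ring

lemma gramLike_allOnes : GramLike (Matrix.of fun _ _ : Fin n => (1 : ℂ)) :=
  ⟨1, fun _ _ => 1, fun k l => by simp⟩

lemma gramLike_prod {κ : Type*} (S : Finset κ) (G : κ → Matrix (Fin n) (Fin n) ℂ)
    (h : ∀ i ∈ S, GramLike (G i)) :
    GramLike (Matrix.of fun k l => ∏ i ∈ S, G i k l) := by
  classical
  induction S using Finset.induction_on with
  | empty => simpa using gramLike_allOnes
  | @insert a s ha ih =>
    have h1 : GramLike (Matrix.of fun k l => ∏ i ∈ s, G i k l) :=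
      ih fun i hi => h i (Finset.mem_insert_of_mem hi)
    have h2 := (h a (Finset.mem_insert_self a s)).mul h1
    have h3 : (Matrix.of fun k l => ∏ i ∈ insert a s, G i k l)
        = Matrix.of fun k l => G a k l * (Matrix.of fun k l => ∏ i ∈ s, G i k l) k l := by
      ext k l
      simp [Finset.prod_insert ha]
    rw [h3]; exact h2

open scoped MatrixOrder in
lemma posSemidef_gramLike {M : Matrix (Fin n) (Fin n) ℂ} (h : M.PosSemidef) :
    GramLike M := by
  refine ⟨n, fun k a => CFC.sqrt M a k, fun k l => ?_⟩
  have herm : (CFC.sqrt M).IsHermitian := by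
    have := (CFC.sqrt_nonneg M).1; simpa using this
  have h1 : M k l = (CFC.sqrt M * CFC.sqrt M) k l := by rw [CFC.sqrt_mul_sqrt_self M h.nonneg]
  rw [h1, Matrix.mul_apply]
  refine Finset.sum_congr rfl fun a _ => ?_
  rw [← RCLike.star_def, herm.apply k a]

lemma dot_of (f : Fin n → Fin n → ℂ) (x : Fin n → ℂ) :
    dotProduct (star x) (Matrix.mulVec (Matrix.of f) x)
      = ∑ k, ∑ l, conj (x k) * x l * f k l := by
  rw [dotProduct]
  refine Finset.sum_congr rfl fun k _ => ?_
  rw [Matrix.mulVec, dotProduct, Finset.mul_sum]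
  refine Finset.sum_congr rfl fun l _ => ?_
  simp only [Pi.star_apply, Matrix.of_apply, RCLike.star_def]
  ring

section InnerGram
variable {E : Type*} [NormedAddCommGroup E] [InnerProductSpace ℂ E]

lemma gram_expand (v : Fin n → E) (x : Fin n → ℂ) :
    ∑ k, ∑ l, conj (x k) * x l * (inner ℂ (v k) (v l) : ℂ)
      = (inner ℂ (∑ k, x k • v k) (∑ k, x k • v k) : ℂ) := by
  rw [sum_inner]
  refine Finset.sum_congr rfl fun k _ => ?_
  rw [inner_smul_left, inner_sum, Finset.mul_sum]
  refine Finset.sum_congr rfl fun l _ => ?_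
  rw [inner_smul_right]
  ring

lemma posSemidef_innerGram (v : Fin n → E) :
    (Matrix.of fun k l => (inner ℂ (v k) (v l) : ℂ)).PosSemidef := by
  refine Matrix.PosSemidef.of_dotProduct_mulVec_nonneg ?_ ?_
  · ext k l
    simp only [Matrix.conjTranspose_apply, Matrix.of_apply, RCLike.star_def]
    exact inner_conj_symm _ _
  · intro x
    rw [dot_of, gram_expand, inner_self_eq_norm_sq_to_K]
    calc (0:ℂ) ≤ ((‖∑ k, x k • v k‖ ^ 2 : ℝ) : ℂ) := Complex.zero_le_real.mpr (by positivity)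
      _ = _ := by norm_cast

lemma gramLike_innerGram (v : Fin n → E) :
    GramLike (Matrix.of fun k l => (inner ℂ (v k) (v l) : ℂ)) :=
  posSemidef_gramLike (posSemidef_innerGram v)

lemma gramLike_opDiff (A : E →L[ℂ] E) (v : Fin n → E) :
    GramLike (Matrix.of fun k l =>
      ((‖A‖ ^ 2 : ℝ) : ℂ) * (inner ℂ (v k) (v l) : ℂ) - (inner ℂ (A (v k)) (A (v l)) : ℂ)) := by
  apply posSemidef_gramLike
  refine Matrix.PosSemidef.of_dotProduct_mulVec_nonneg ?_ ?_
  · ext k l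
    simp only [Matrix.conjTranspose_apply, Matrix.of_apply, star_sub, star_mul',
      RCLike.star_def, Complex.conj_ofReal, inner_conj_symm]
  · intro x
    rw [dot_of]
    have hsplit : ∑ k, ∑ l, conj (x k) * x l *
          (((‖A‖ ^ 2 : ℝ) : ℂ) * (inner ℂ (v k) (v l) : ℂ) - (inner ℂ (A (v k)) (A (v l)) : ℂ))
        = ((‖A‖ ^ 2 : ℝ) : ℂ) * (∑ k, ∑ l, conj (x k) * x l * (inner ℂ (v k) (v l) : ℂ))
          - ∑ k, ∑ l, conj (x k) * x l * (inner ℂ (A (v k)) (A (v l)) : ℂ) := by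
      rw [Finset.mul_sum, ← Finset.sum_sub_distrib]
      refine Finset.sum_congr rfl fun k _ => ?_
      rw [Finset.mul_sum, ← Finset.sum_sub_distrib]
      refine Finset.sum_congr rfl fun l _ => ?_
      ring
    rw [hsplit, gram_expand, gram_expand]
    have hAu : (∑ k, x k • A (v k)) = A (∑ k, x k • v k) := by
      rw [map_sum]; simp [map_smul]
    rw [hAu]
    set u := ∑ k, x k • v k with hu
    rw [inner_self_eq_norm_sq_to_K, inner_self_eq_norm_sq_to_K]
    have hle : ‖A u‖ ≤ ‖A‖ * ‖u‖ := A.le_opNorm u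
    calc (0:ℂ) ≤ ((‖A‖ ^ 2 * ‖u‖ ^ 2 - ‖A u‖ ^ 2 : ℝ) : ℂ) :=
          Complex.zero_le_real.mpr (by nlinarith [norm_nonneg (A u), norm_nonneg u, norm_nonneg A])
      _ = ((‖A‖ ^ 2 : ℝ) : ℂ) * ((‖u‖ : ℝ) : ℂ) ^ 2 - ((‖A u‖ : ℝ) : ℂ) ^ 2 := by
            push_cast; ring
      _ = _ := by norm_num
end InnerGram

/-! ### The key telescoping inequality -/

lemma gram_key {κ : Type*} (E : Matrix (Fin n) (Fin n) ℂ) (hE : GramLike E)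
    (r : κ → ℝ) (hr : ∀ i, 0 ≤ r i) (S : Finset κ) (G : κ → Matrix (Fin n) (Fin n) ℂ)
    (hG : ∀ i ∈ S, GramLike (G i)) (c : Fin n → ℂ) :
    ∀ (F : Finset κ), F ⊆ S → ∀ (G' : κ → Matrix (Fin n) (Fin n) ℂ),
      (∀ i ∈ F, GramLike (G' i)) →
      (∀ i ∈ F, GramLike (Matrix.of fun k l => ((r i : ℝ) : ℂ) * G i k l - G' i k l)) →
      (∀ i ∈ S, i ∉ F → G' i = G i) →
      (∑ k, ∑ l, conj (c k) * c l * (E k l * ∏ i ∈ S, G' i k l)).re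
        ≤ (∏ i ∈ F, r i) * (∑ k, ∑ l, conj (c k) * c l * (E k l * ∏ i ∈ S, G i k l)).re := by
  classical
  intro F
  induction F using Finset.induction_on with
  | empty =>
    intro _ G' _ _ heq
    have hs : (∑ k, ∑ l, conj (c k) * c l * (E k l * ∏ i ∈ S, G' i k l))
        = ∑ k, ∑ l, conj (c k) * c l * (E k l * ∏ i ∈ S, G i k l) := by
      refine Finset.sum_congr rfl fun k _ => Finset.sum_congr rfl fun l _ => ?_
      have : (∏ i ∈ S, G' i k l) = ∏ i ∈ S, G i k l :=
        Finset.prod_congr rfl fun i hi => by rw [heq i hi (Finset.notMem_empty i)]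
      rw [this]
    rw [Finset.prod_empty, one_mul, hs]
  | @insert a F₀ ha ih =>
    intro hFS G' hG' hdiff heq
    have haS : a ∈ S := hFS (Finset.mem_insert_self a F₀)
    have hF₀S : F₀ ⊆ S := fun i hi => hFS (Finset.mem_insert_of_mem hi)
    set G'' := Function.update G' a (G a) with hG''def
    have hG''a : G'' a = G a := Function.update_self a (G a) G'
    have hG''ne : ∀ i, i ≠ a → G'' i = G' i := fun i hi => Function.update_of_ne hi (G a) G'
    have hsplit : ∀ (Gf : κ → Matrix (Fin n) (Fin n) ℂ) k l,
        (∏ i ∈ S, Gf i k l) = Gf a k l * ∏ i ∈ S.erase a, Gf i k l :=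
      fun Gf k l => (Finset.mul_prod_erase S (fun i => Gf i k l) haS).symm
    have hprod'' : ∀ k l, (∏ i ∈ S, G'' i k l) = G a k l * ∏ i ∈ S.erase a, G' i k l := by
      intro k l
      rw [hsplit G'' k l, hG''a]
      congr 1
      refine Finset.prod_congr rfl fun i hi => ?_
      rw [hG''ne i (Finset.ne_of_mem_erase hi)]
    have hErase : ∀ i ∈ S.erase a, GramLike (G' i) := by
      intro i hi
      have hia : i ≠ a := Finset.ne_of_mem_erase hi
      have hiS : i ∈ S := Finset.mem_of_mem_erase hi
      by_cases hiF : i ∈ F₀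
      · exact hG' i (Finset.mem_insert_of_mem hiF)
      · rw [heq i hiS (by simp [hia, hiF])]
        exact hG i hiS
    set D : Matrix (Fin n) (Fin n) ℂ := Matrix.of fun k l =>
      (((r a : ℝ) : ℂ) * G a k l - G' a k l) * (∏ i ∈ S.erase a, G' i k l) with hDdef
    have hD : GramLike D :=
      (hdiff a (Finset.mem_insert_self a F₀)).mul (gramLike_prod _ _ hErase)
    have hED : GramLike (Matrix.of fun k l => E k l * D k l) := hE.mul hD
    have hcplx : ((r a : ℝ) : ℂ) * (∑ k, ∑ l, conj (c k) * c l * (E k l * ∏ i ∈ S, G'' i k l))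
          - (∑ k, ∑ l, conj (c k) * c l * (E k l * ∏ i ∈ S, G' i k l))
        = ∑ k, ∑ l, conj (c k) * c l * (E k l * D k l) := by
      rw [Finset.mul_sum, ← Finset.sum_sub_distrib]
      refine Finset.sum_congr rfl fun k _ => ?_
      rw [Finset.mul_sum, ← Finset.sum_sub_distrib]
      refine Finset.sum_congr rfl fun l _ => ?_
      rw [hprod'' k l, hsplit G' k l, hDdef]
      simp only [Matrix.of_apply]
      ring
    have hstep : (∑ k, ∑ l, conj (c k) * c l * (E k l * ∏ i ∈ S, G' i k l)).re
        ≤ r a * (∑ k, ∑ l, conj (c k) * c l * (E k l * ∏ i ∈ S, G'' i k l)).re := by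
      have h0 : 0 ≤ (∑ k, ∑ l, conj (c k) * c l * (E k l * D k l)).re := by
        have := hED.qf_nonneg c
        simpa using this
      have hre := congrArg Complex.re hcplx
      rw [Complex.sub_re, Complex.re_ofReal_mul] at hre
      linarith
    have hih := ih hF₀S G''
      (fun i hi => by rw [hG''ne i (fun h => ha (h ▸ hi))]; exact hG' i (Finset.mem_insert_of_mem hi))
      (fun i hi => by rw [hG''ne i (fun h => ha (h ▸ hi))]; exact hdiff i (Finset.mem_insert_of_mem hi))
      (fun i hiS hiF => by
        by_cases hia : i = a
        · subst hia; exact hG''a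
        · rw [hG''ne i hia]; exact heq i hiS (by simp [hia, hiF]))
    calc (∑ k, ∑ l, conj (c k) * c l * (E k l * ∏ i ∈ S, G' i k l)).re
        ≤ r a * (∑ k, ∑ l, conj (c k) * c l * (E k l * ∏ i ∈ S, G'' i k l)).re := hstep
      _ ≤ r a * ((∏ i ∈ F₀, r i) * (∑ k, ∑ l, conj (c k) * c l * (E k l * ∏ i ∈ S, G i k l)).re) :=
          mul_le_mul_of_nonneg_left hih (hr a)
      _ = (∏ i ∈ insert a F₀, r i) * (∑ k, ∑ l, conj (c k) * c l * (E k l * ∏ i ∈ S, G i k l)).re := by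
          rw [Finset.prod_insert ha]; ring

/-! ### hform lemmas -/

lemma unit_inner_eq_one_iff {E : Type*} [NormedAddCommGroup E] [InnerProductSpace ℂ E]
    {u v : E} (hu : ‖u‖ = 1) (hv : ‖v‖ = 1) : (inner ℂ u v : ℂ) = 1 ↔ u = v := by
  constructor
  · intro h
    have h2 : ‖u - v‖ ^ 2 = 0 := by
      rw [@norm_sub_sq ℂ, h, hu, hv]
      norm_num
    have h3 : u - v = 0 := by
      rwa [pow_eq_zero_iff (by norm_num), norm_eq_zero] at h2
    rw [sub_eq_zero] at h3; exact h3
  · rintro rfl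
    rw [inner_self_eq_norm_sq_to_K, hu]
    norm_num

variable {I : Type*} (H : I → Type*) [∀ i, NormedAddCommGroup (H i)]
  [∀ i, InnerProductSpace ℂ (H i)]

lemma if_finprod_factor (S : Finset I) (d f g : I → ℂ) (hd : ∀ i ∉ S, d i = 1)
    (hfg : ∀ i, f i = d i * g i) :
    (if {i | f i ≠ 1}.Finite then ∏ᶠ i, f i else 0)
      = (∏ i ∈ S, d i) * (if {i | g i ≠ 1}.Finite then ∏ᶠ i, g i else 0) := by
  have hsub1 : {i | f i ≠ 1} ⊆ {i | g i ≠ 1} ∪ ↑S := by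
    intro i hi
    by_cases hiS : i ∈ S
    · exact Or.inr hiS
    · left
      intro hgi
      exact hi (by rw [hfg i, hd i hiS, one_mul]; exact hgi)
  have hsub2 : {i | g i ≠ 1} ⊆ {i | f i ≠ 1} ∪ ↑S := by
    intro i hi
    by_cases hiS : i ∈ S
    · exact Or.inr hiS
    · left
      intro hfi
      refine hi ?_
      rw [hfg i, hd i hiS, one_mul] at hfi
      exact hfi
  have hdsupp : (Function.mulSupport d).Finite := by
    refine Set.Finite.subset S.finite_toSet ?_
    intro i hi
    by_contra hiS
    exact hi (hd i hiS)
  by_cases hg : {i | g i ≠ 1}.Finite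
  · have hf : {i | f i ≠ 1}.Finite := ((hg.union S.finite_toSet)).subset hsub1
    rw [if_pos hf, if_pos hg]
    have hgsupp : (Function.mulSupport g).Finite := hg
    calc (∏ᶠ i, f i) = ∏ᶠ i, d i * g i := finprod_congr hfg
      _ = (∏ᶠ i, d i) * ∏ᶠ i, g i := finprod_mul_distrib hdsupp hgsupp
      _ = (∏ i ∈ S, d i) * ∏ᶠ i, g i := by
          rw [finprod_eq_prod_of_mulSupport_subset d (s := S)]
          intro i hi
          by_contra hiS
          exact hi (hd i hiS)
  · have hf : ¬ {i | f i ≠ 1}.Finite := fun h => hg ((h.union S.finite_toSet).subset hsub2)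
    rw [if_neg hf, if_neg hg, mul_zero]

lemma hform_def (u v : ∀ i, H i) : hform H u v
    = if {i | (inner ℂ (u i) (v i) : ℂ) ≠ 1}.Finite
        then ∏ᶠ i, (inner ℂ (u i) (v i) : ℂ) else 0 := rfl

lemma hform_scale_left (S : Finset I) (p : I → ℝ) (hp1 : ∀ i ∉ S, p i = 1)
    (u a v : ∀ i, H i) (hu : ∀ i, u i = ((p i : ℝ) : ℂ) • a i) :
    hform H u v = ((∏ i ∈ S, p i : ℝ) : ℂ) * hform H a v := by
  rw [hform_def, hform_def]
  have h := if_finprod_factor S (fun i => ((p i : ℝ) : ℂ))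
    (fun i => (inner ℂ (u i) (v i) : ℂ)) (fun i => (inner ℂ (a i) (v i) : ℂ))
    (fun i hi => show ((p i : ℝ) : ℂ) = 1 by rw [hp1 i hi]; norm_num)
    (fun i => show (inner ℂ (u i) (v i) : ℂ) = ((p i : ℝ) : ℂ) * (inner ℂ (a i) (v i) : ℂ) by
      rw [hu i, inner_smul_left, Complex.conj_ofReal])
  rw [h, Complex.ofReal_prod]

lemma hform_scale_right (S : Finset I) (p : I → ℝ) (hp1 : ∀ i ∉ S, p i = 1)
    (u v b : ∀ i, H i) (hv : ∀ i, v i = ((p i : ℝ) : ℂ) • b i) :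
    hform H u v = ((∏ i ∈ S, p i : ℝ) : ℂ) * hform H u b := by
  rw [hform_def, hform_def]
  have h := if_finprod_factor S (fun i => ((p i : ℝ) : ℂ))
    (fun i => (inner ℂ (u i) (v i) : ℂ)) (fun i => (inner ℂ (u i) (b i) : ℂ))
    (fun i hi => show ((p i : ℝ) : ℂ) = 1 by rw [hp1 i hi]; norm_num)
    (fun i => show (inner ℂ (u i) (v i) : ℂ) = ((p i : ℝ) : ℂ) * (inner ℂ (u i) (b i) : ℂ) by
      rw [hv i, inner_smul_right])
  rw [h, Complex.ofReal_prod]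

lemma hform_eq_prod (S : Finset I) (u v : ∀ i, H i)
    (h : ∀ i ∉ S, (inner ℂ (u i) (v i) : ℂ) = 1) :
    hform H u v = ∏ i ∈ S, (inner ℂ (u i) (v i) : ℂ) := by
  have hsupp : Function.mulSupport (fun i => (inner ℂ (u i) (v i) : ℂ)) ⊆ ↑S := by
    intro i hi
    by_contra hiS
    exact hi (h i hiS)
  have hfin : ({i | (inner ℂ (u i) (v i) : ℂ) ≠ 1}).Finite := S.finite_toSet.subset hsupp
  rw [hform_def, if_pos hfin, finprod_eq_prod_of_mulSupport_subset _ hsupp]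

lemma hform_eq_zero (u v : ∀ i, H i)
    (h : ¬ {i | (inner ℂ (u i) (v i) : ℂ) ≠ 1}.Finite) : hform H u v = 0 := by
  rw [hform_def, if_neg h]

/-! ### Decomposition of the image of an elementary tensor -/

lemma exists_decomp (F : Finset I) (T' : ∀ i, H i →L[ℂ] H i)
    (hT' : ∀ i ∉ F, ∀ u v : H i, (inner ℂ (T' i u) (T' i v) : ℂ) = inner ℂ u v)
    (x : ∀ i, H i) (hx : ∀ i, ‖x i‖ = 1) :
    ∃ x' : ∀ i, H i, (∀ i, ‖x' i‖ = 1) ∧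
      (∀ i, T' i (x i) = (((if i ∈ F then ‖T' i (x i)‖ else 1 : ℝ)) : ℂ) • x' i) ∧
      PiTensorProduct.tprod ℂ (fun i => T' i (x i))
        = ((∏ i ∈ F, ‖T' i (x i)‖ : ℝ) : ℂ) • PiTensorProduct.tprod ℂ x' := by
  classical
  have hnorm : ∀ i ∉ F, ‖T' i (x i)‖ = 1 := by
    intro i hi
    have h1 : (inner ℂ (T' i (x i)) (T' i (x i)) : ℂ) = inner ℂ (x i) (x i) := hT' i hi _ _
    rw [inner_self_eq_norm_sq_to_K, inner_self_eq_norm_sq_to_K, hx i] at h1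
    have h2 : (‖T' i (x i)‖ : ℝ) ^ 2 = 1 ^ 2 := by exact_mod_cast h1
    nlinarith [norm_nonneg (T' i (x i))]
  set x' : ∀ i, H i := fun i =>
    if i ∈ F then
      (if T' i (x i) = 0 then x i else (((‖T' i (x i)‖⁻¹ : ℝ)) : ℂ) • T' i (x i))
    else T' i (x i) with hx'def
  have hsc : ∀ i, T' i (x i) = (((if i ∈ F then ‖T' i (x i)‖ else 1 : ℝ)) : ℂ) • x' i := by
    intro i
    by_cases hiF : i ∈ F
    · by_cases h0 : T' i (x i) = 0
      · simp only [hx'def, if_pos hiF, if_pos h0, h0, norm_zero]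
        norm_num
      · simp only [hx'def, if_pos hiF, if_neg h0, smul_smul]
        rw [← Complex.ofReal_mul, mul_inv_cancel₀ (norm_ne_zero_iff.mpr h0)]
        norm_num
    · simp only [hx'def, if_neg hiF]
      norm_num
  have hx'u : ∀ i, ‖x' i‖ = 1 := by
    intro i
    by_cases hiF : i ∈ F
    · by_cases h0 : T' i (x i) = 0
      · simp only [hx'def, if_pos hiF, if_pos h0]; exact hx i
      · simp only [hx'def, if_pos hiF, if_neg h0, norm_smul, Complex.norm_real,
          Real.norm_eq_abs, abs_inv, abs_norm]
        rw [inv_mul_cancel₀ (norm_ne_zero_iff.mpr h0)]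
    · simp only [hx'def, if_neg hiF]
      exact hnorm i hiF
  refine ⟨x', hx'u, hsc, ?_⟩
  have hfun : (fun i => T' i (x i))
      = F.piecewise (fun i => (((‖T' i (x i)‖ : ℝ)) : ℂ) • x' i) x' := by
    funext i
    by_cases hiF : i ∈ F
    · rw [Finset.piecewise_eq_of_mem _ _ _ hiF]
      have := hsc i
      rwa [if_pos hiF] at this
    · rw [Finset.piecewise_eq_of_notMem _ _ _ hiF]
      have := hsc i
      rwa [if_neg hiF, Complex.ofReal_one, one_smul] at this
  rw [hfun, MultilinearMap.map_piecewise_smul, ← Complex.ofReal_prod]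

/-- The induced map on the tensor product preserves `unTensorSpan`. -/
lemma map_mem_unTensorSpan (F : Finset I) (T' : ∀ i, H i →L[ℂ] H i)
    (hT' : ∀ i ∉ F, ∀ u v : H i, (inner ℂ (T' i u) (T' i v) : ℂ) = inner ℂ u v) :
    ∀ ξ ∈ unTensorSpan H,
      PiTensorProduct.map (fun i => (T' i : H i →ₗ[ℂ] H i)) ξ ∈ unTensorSpan H := by
  intro ξ hξ
  have hξ' : ξ ∈ Submodule.span ℂ
      {t | ∃ x : ∀ i, H i, (∀ i, ‖x i‖ = 1) ∧ t = PiTensorProduct.tprod ℂ x} := hξ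
  clear hξ
  induction hξ' using Submodule.span_induction with
  | mem t ht =>
    obtain ⟨x, hx, rfl⟩ := ht
    rw [PiTensorProduct.map_tprod]
    obtain ⟨x', hx'u, _, htp⟩ := exists_decomp H F T' hT' x hx
    have hco : (PiTensorProduct.tprod ℂ fun i => (T' i : H i →ₗ[ℂ] H i) (x i))
        = PiTensorProduct.tprod ℂ (fun i => T' i (x i)) := by
      simp only [ContinuousLinearMap.coe_coe]
    rw [hco, htp]
    exact Submodule.smul_mem _ _ (Submodule.subset_span ⟨x', hx'u, rfl⟩)
  | zero => rw [map_zero]; exact Submodule.zero_mem _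
  | add v w hv hw ihv ihw => rw [map_add]; exact Submodule.add_mem _ ihv ihw
  | smul c v hv ihv => rw [map_smul]; exact Submodule.smul_mem _ _ ihv

end PTMOBaux


open PTMOBaux in
/-- For a family of bounded operators `T_i` on Hilbert spaces `H_i` which are unitary outside
a finite set `F`, the induced map `M` on `⨂_{i∈I} H_i` preserves `⨂^un_{i∈I} H_i`, is bounded
there (with norm at most `∏_{i∈F} ‖T_i‖` for the form `B`), and has`M†` as its adjoint
with respect to `B`. -/
theorem piTensor_map_operator_bounded {I : Type*} [Infinite I]
    (H : I → Type*) [∀ i, NormedAddCommGroup (H i)] [∀ i, InnerProductSpace ℂ (H i)]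
    [∀ i, CompleteSpace (H i)]
    (F : Finset I) (T : ∀ i, H i →L[ℂ] H i)
    (hT : ∀ i ∉ F, ContinuousLinearMap.adjoint (T i) * T i = 1 ∧
      T i * ContinuousLinearMap.adjoint (T i) = 1)
    (M : (⨂[ℂ] i, H i) →ₗ[ℂ] ⨂[ℂ] i, H i)
    (hM : M = PiTensorProduct.map (fun i => (T i : H i →ₗ[ℂ] H i)))
    (Md : (⨂[ℂ] i, H i) →ₗ[ℂ] ⨂[ℂ] i, H i)
    (hMd : Md = PiTensorProduct.map
      (fun i => (ContinuousLinearMap.adjoint (T i) : H i →ₗ[ℂ] H i)))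
    (B : unTensorSpan H → unTensorSpan H → ℂ)
    (Badd₁ : ∀ ξ ξ' η : unTensorSpan H, B (ξ + ξ') η = B ξ η + B ξ' η)
    (Bsmul₁ : ∀ (c : ℂ) (ξ η : unTensorSpan H), B (c • ξ) η = conj c * B ξ η)
    (Badd₂ : ∀ ξ η η' : unTensorSpan H, B ξ (η + η') = B ξ η + B ξ η')
    (Bsmul₂ : ∀ (c : ℂ) (ξ η : unTensorSpan H), B ξ (c • η) = c * B ξ η)
    (Bh : ∀ (x y : ∀ i, H i) (hx : ∀ i, ‖x i‖ = 1) (hy : ∀ i, ‖y i‖ = 1)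
      (hmx : PiTensorProduct.tprod ℂ x ∈ unTensorSpan H)
      (hmy : PiTensorProduct.tprod ℂ y ∈ unTensorSpan H),
      B ⟨PiTensorProduct.tprod ℂ x, hmx⟩ ⟨PiTensorProduct.tprod ℂ y, hmy⟩ = hform H x y) :
    (∀ ξ : ⨂[ℂ] i, H i, ξ ∈ unTensorSpan H → M ξ ∈ unTensorSpan H) ∧
    (∀ (ξ : unTensorSpan H) (hm : M ξ.1 ∈ unTensorSpan H),
      (B ⟨M ξ.1, hm⟩ ⟨M ξ.1, hm⟩).re ≤ (∏ i ∈ F, ‖T i‖ ^ 2) * (B ξ ξ).re) ∧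
    (∀ (ξ η : unTensorSpan H) (hm : M ξ.1 ∈ unTensorSpan H)
      (hm' : Md η.1 ∈ unTensorSpan H),
      B ⟨M ξ.1, hm⟩ η = B ξ ⟨Md η.1, hm'⟩) := by
  classical
  -- the operators preserve inner ℂ products outside `F`
  have hTin : ∀ i ∉ F, ∀ u v : H i, (inner ℂ (T i u) (T i v) : ℂ) = inner ℂ u v := by
    intro i hi u v
    have h1 : (ContinuousLinearMap.adjoint (T i)) ((T i) v) = v := by
      have h := congrArg (fun (A : H i →L[ℂ] H i) => A v) (hT i hi).1
      simpa using h
    calc (inner ℂ (T i u) (T i v) : ℂ)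
        = inner ℂ u ((ContinuousLinearMap.adjoint (T i)) ((T i) v)) :=
          (ContinuousLinearMap.adjoint_inner_right (T i) u ((T i) v)).symm
      _ = inner ℂ u v := by rw [h1]
  have hTdin : ∀ i ∉ F, ∀ u v : H i,
      (inner ℂ ((ContinuousLinearMap.adjoint (T i)) u) ((ContinuousLinearMap.adjoint (T i)) v) : ℂ)
        = inner ℂ u v := by
    intro i hi u v
    have h1 : (T i) ((ContinuousLinearMap.adjoint (T i)) v) = v := by
      have h := congrArg (fun (A : H i →L[ℂ] H i) => A v) (hT i hi).2
      simpa using h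
    calc (inner ℂ ((ContinuousLinearMap.adjoint (T i)) u) ((ContinuousLinearMap.adjoint (T i)) v) : ℂ)
        = inner ℂ u ((ContinuousLinearMap.adjoint (ContinuousLinearMap.adjoint (T i)))
            ((ContinuousLinearMap.adjoint (T i)) v)) :=
          (ContinuousLinearMap.adjoint_inner_right _ u _).symm
      _ = inner ℂ u ((T i) ((ContinuousLinearMap.adjoint (T i)) v)) := by
          rw [ContinuousLinearMap.adjoint_adjoint]
      _ = inner ℂ u v := by rw [h1]
  -- part (i)
  have part1 : ∀ ξ : ⨂[ℂ] i, H i, ξ ∈ unTensorSpan H → M ξ ∈ unTensorSpan H := by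
    intro ξ hξ
    rw [hM]
    exact map_mem_unTensorSpan H F T hTin ξ hξ
  have part1d : ∀ ξ : ⨂[ℂ] i, H i, ξ ∈ unTensorSpan H → Md ξ ∈ unTensorSpan H := by
    intro ξ hξ
    rw [hMd]
    exact map_mem_unTensorSpan H F (fun i => ContinuousLinearMap.adjoint (T i)) hTdin ξ hξ
  -- B of zero
  have hB0l : ∀ η, B 0 η = 0 := by
    intro η
    have h := Bsmul₁ 0 0 η
    rwa [zero_smul, map_zero, zero_mul] at h
  have hB0r : ∀ ξ', B ξ' 0 = 0 := by
    intro ξ'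
    have h := Bsmul₂ 0 ξ' 0
    rwa [zero_smul, zero_mul] at h
  -- part (iii)
  have part3 : ∀ (v : ⨂[ℂ] i, H i) (hv : v ∈ Submodule.span ℂ
        {t | ∃ x : ∀ i, H i, (∀ i, ‖x i‖ = 1) ∧ t = PiTensorProduct.tprod ℂ x})
      (h1 : M v ∈ unTensorSpan H) (w : ⨂[ℂ] i, H i) (hw : w ∈ Submodule.span ℂ
        {t | ∃ x : ∀ i, H i, (∀ i, ‖x i‖ = 1) ∧ t = PiTensorProduct.tprod ℂ x})
      (h2 : Md w ∈ unTensorSpan H),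
      B ⟨M v, h1⟩ ⟨w, hw⟩ = B ⟨v, hv⟩ ⟨Md w, h2⟩ := by
    have base : ∀ (x : ∀ i, H i) (hx : ∀ i, ‖x i‖ = 1)
        (h1 : M (PiTensorProduct.tprod ℂ x) ∈ unTensorSpan H)
        (hvx : PiTensorProduct.tprod ℂ x ∈ unTensorSpan H)
        (w : ⨂[ℂ] i, H i) (hw : w ∈ Submodule.span ℂ
          {t | ∃ x : ∀ i, H i, (∀ i, ‖x i‖ = 1) ∧ t = PiTensorProduct.tprod ℂ x})
        (h2 : Md w ∈ unTensorSpan H),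
        B ⟨M (PiTensorProduct.tprod ℂ x), h1⟩ ⟨w, hw⟩
          = B ⟨PiTensorProduct.tprod ℂ x, hvx⟩ ⟨Md w, h2⟩ := by
      intro x hx h1 hvx w hw
      induction hw using Submodule.span_induction with
      | mem t ht =>
        obtain ⟨y, hy, rfl⟩ := ht
        intro h2
        obtain ⟨x', hx'u, hx'sc, hx'tp⟩ := exists_decomp H F T hTin x hx
        obtain ⟨y', hy'u, hy'sc, hy'tp⟩ :=
          exists_decomp H F (fun i => ContinuousLinearMap.adjoint (T i)) hTdin y hy
        have hMx : M (PiTensorProduct.tprod ℂ x)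
            = ((∏ i ∈ F, ‖T i (x i)‖ : ℝ) : ℂ) • PiTensorProduct.tprod ℂ x' := by
          rw [hM, PiTensorProduct.map_tprod]
          exact hx'tp
        have hMy : Md (PiTensorProduct.tprod ℂ y)
            = ((∏ i ∈ F, ‖(ContinuousLinearMap.adjoint (T i)) (y i)‖ : ℝ) : ℂ)
              • PiTensorProduct.tprod ℂ y' := by
          rw [hMd, PiTensorProduct.map_tprod]
          exact hy'tp
        have e2 : (⟨M (PiTensorProduct.tprod ℂ x), h1⟩ : unTensorSpan H)
            = ((∏ i ∈ F, ‖T i (x i)‖ : ℝ) : ℂ) •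
              (⟨PiTensorProduct.tprod ℂ x', Submodule.subset_span ⟨x', hx'u, rfl⟩⟩ :
                unTensorSpan H) :=
          Subtype.ext hMx
        have e3 : (⟨Md (PiTensorProduct.tprod ℂ y), h2⟩ : unTensorSpan H)
            = ((∏ i ∈ F, ‖(ContinuousLinearMap.adjoint (T i)) (y i)‖ : ℝ) : ℂ) •
              (⟨PiTensorProduct.tprod ℂ y', Submodule.subset_span ⟨y', hy'u, rfl⟩⟩ :
                unTensorSpan H) :=
          Subtype.ext hMy
        rw [e2, e3, Bsmul₁, Bsmul₂, Complex.conj_ofReal]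
        erw [Bh x' y hx'u hy, Bh x y' hx hy'u]
        have hL : hform H (fun i => T i (x i)) y
            = ((∏ i ∈ F, ‖T i (x i)‖ : ℝ) : ℂ) * hform H x' y := by
          rw [hform_scale_left H F (fun i => if i ∈ F then ‖T i (x i)‖ else 1)
            (fun i hi => if_neg hi) _ x' y hx'sc]
          norm_cast
          rw [Finset.prod_congr rfl (fun i hi => if_pos hi)]
        have hR : hform H x (fun i => (ContinuousLinearMap.adjoint (T i)) (y i))
            = ((∏ i ∈ F, ‖(ContinuousLinearMap.adjoint (T i)) (y i)‖ : ℝ) : ℂ)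
              * hform H x y' := by
          rw [hform_scale_right H F
            (fun i => if i ∈ F then ‖(ContinuousLinearMap.adjoint (T i)) (y i)‖ else 1)
            (fun i hi => if_neg hi) x _ y' hy'sc]
          norm_cast
          rw [Finset.prod_congr rfl (fun i hi => if_pos hi)]
        have hfactor : ∀ i, (inner ℂ (T i (x i)) (y i) : ℂ)
            = inner ℂ (x i) ((ContinuousLinearMap.adjoint (T i)) (y i)) :=
          fun i => (ContinuousLinearMap.adjoint_inner_right (T i) (x i) (y i)).symm
        have hhe : hform H (fun i => T i (x i)) y
            = hform H x (fun i => (ContinuousLinearMap.adjoint (T i)) (y i)) := by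
          rw [hform_def, hform_def]
          simp only [hfactor]
        rw [← hL, hhe, hR]
      | zero =>
        intro h2
        have ez : (⟨(0 : ⨂[ℂ] i, H i), Submodule.zero_mem _⟩ : unTensorSpan H) = 0 := rfl
        have ez2 : (⟨Md 0, h2⟩ : unTensorSpan H) = 0 := Subtype.ext (map_zero Md)
        rw [ez, ez2, hB0r, hB0r]
      | add w w' hwmem hw'mem ihw ihw' =>
        intro h2
        have hw2 : Md w ∈ unTensorSpan H := part1d w hwmem
        have hw'2 : Md w' ∈ unTensorSpan H := part1d w' hw'mem
        have ea : (⟨w + w', Submodule.add_mem _ hwmem hw'mem⟩ : unTensorSpan H)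
            = ⟨w, hwmem⟩ + ⟨w', hw'mem⟩ := rfl
        have ea2 : (⟨Md (w + w'), h2⟩ : unTensorSpan H)
            = ⟨Md w, hw2⟩ + ⟨Md w', hw'2⟩ := Subtype.ext (map_add Md w w')
        rw [ea, ea2, Badd₂, Badd₂, ihw hw2, ihw' hw'2]
      | smul a w hwmem ihw =>
        intro h2
        have hw2 : Md w ∈ unTensorSpan H := part1d w hwmem
        have es : (⟨a • w, Submodule.smul_mem _ a hwmem⟩ : unTensorSpan H)
            = a • ⟨w, hwmem⟩ := rfl
        have es2 : (⟨Md (a • w), h2⟩ : unTensorSpan H) = a • ⟨Md w, hw2⟩ :=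
          Subtype.ext (map_smul Md a w)
        rw [es, es2, Bsmul₂, Bsmul₂, ihw hw2]
    intro v hv
    induction hv using Submodule.span_induction with
    | mem t ht =>
      intro h1 w hw h2
      obtain ⟨x, hx, rfl⟩ := ht
      exact base x hx h1 _ w hw h2
    | zero =>
      intro h1 w hw h2
      have ez : (⟨(0 : ⨂[ℂ] i, H i), Submodule.zero_mem _⟩ : unTensorSpan H) = 0 := rfl
      have ez1 : (⟨M 0, h1⟩ : unTensorSpan H) = 0 := Subtype.ext (map_zero M)
      rw [ez, ez1, hB0l, hB0l]
    | add v v' hvmem hv'mem ihv ihv' =>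
      intro h1 w hw h2
      have hv1 : M v ∈ unTensorSpan H := part1 v hvmem
      have hv'1 : M v' ∈ unTensorSpan H := part1 v' hv'mem
      have ea : (⟨v + v', Submodule.add_mem _ hvmem hv'mem⟩ : unTensorSpan H)
          = ⟨v, hvmem⟩ + ⟨v', hv'mem⟩ := rfl
      have ea1 : (⟨M (v + v'), h1⟩ : unTensorSpan H)
          = ⟨M v, hv1⟩ + ⟨M v', hv'1⟩ := Subtype.ext (map_add M v v')
      rw [ea, ea1, Badd₁, Badd₁, ihv hv1 w hw h2, ihv' hv'1 w hw h2]
    | smul a v hvmem ihv =>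
      intro h1 w hw h2
      have hv1 : M v ∈ unTensorSpan H := part1 v hvmem
      have es : (⟨a • v, Submodule.smul_mem _ a hvmem⟩ : unTensorSpan H)
          = a • ⟨v, hvmem⟩ := rfl
      have es1 : (⟨M (a • v), h1⟩ : unTensorSpan H) = a • ⟨M v, hv1⟩ :=
        Subtype.ext (map_smul M a v)
      rw [es, es1, Bsmul₁, Bsmul₁, ihv hv1 w hw h2]
  refine ⟨part1, ?_, fun ξ η hm hm' => part3 ξ.1 ξ.2 hm η.1 η.2 hm'⟩
  -- part (ii)
  intro ξ hm
  obtain ⟨n, c, gv, hsum⟩ := Submodule.mem_span_set'.mp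
    (show ξ.1 ∈ Submodule.span ℂ
      {t | ∃ x : ∀ i, H i, (∀ i, ‖x i‖ = 1) ∧ t = PiTensorProduct.tprod ℂ x} from ξ.2)
  choose x hxu hxe using fun k => (gv k).2
  choose x' hx'u hx'sc hx'tp using fun k => exists_decomp H F T hTin (x k) (hxu k)
  set p : Fin n → ℝ := fun k => ∏ i ∈ F, ‖T i (x k i)‖ with hpdef
  have hmemx : ∀ k, PiTensorProduct.tprod ℂ (x k) ∈ unTensorSpan H :=
    fun k => Submodule.subset_span ⟨x k, hxu k, rfl⟩
  have hmemx' : ∀ k, PiTensorProduct.tprod ℂ (x' k) ∈ unTensorSpan H :=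
    fun k => Submodule.subset_span ⟨x' k, hx'u k, rfl⟩
  set e : Fin n → unTensorSpan H := fun k => ⟨PiTensorProduct.tprod ℂ (x k), hmemx k⟩
    with hedef
  set e' : Fin n → unTensorSpan H := fun k => ⟨PiTensorProduct.tprod ℂ (x' k), hmemx' k⟩
    with he'def
  have hξrep : ξ = ∑ k, c k • e k := by
    apply Subtype.ext
    calc ξ.1 = ∑ k, c k • ((gv k : ⨂[ℂ] i, H i)) := hsum.symm
      _ = ∑ k, c k • PiTensorProduct.tprod ℂ (x k) :=
          Finset.sum_congr rfl fun k _ => by rw [hxe k]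
      _ = ((∑ k, c k • e k : unTensorSpan H) : ⨂[ℂ] i, H i) := by
          rw [AddSubmonoidClass.coe_finset_sum]
          exact Finset.sum_congr rfl fun k _ => rfl
  have hMrep : (⟨M ξ.1, hm⟩ : unTensorSpan H) = ∑ k, (c k * ((p k : ℝ) : ℂ)) • e' k := by
    apply Subtype.ext
    calc M ξ.1 = M (∑ k, c k • PiTensorProduct.tprod ℂ (x k)) := by
          rw [← hsum]
          congr 1
          exact Finset.sum_congr rfl fun k _ => by rw [hxe k]
      _ = ∑ k, c k • M (PiTensorProduct.tprod ℂ (x k)) := by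
          rw [map_sum]
          exact Finset.sum_congr rfl fun k _ => by rw [map_smul]
      _ = ∑ k, (c k * ((p k : ℝ) : ℂ)) • PiTensorProduct.tprod ℂ (x' k) := by
          refine Finset.sum_congr rfl fun k _ => ?_
          rw [hM, PiTensorProduct.map_tprod]
          have htp : (PiTensorProduct.tprod ℂ fun i => (T i : H i →ₗ[ℂ] H i) ((x k) i))
              = ((p k : ℝ) : ℂ) • PiTensorProduct.tprod ℂ (x' k) := hx'tp k
          rw [htp, smul_smul]
      _ = ((∑ k, (c k * ((p k : ℝ) : ℂ)) • e' k : unTensorSpan H) : ⨂[ℂ] i, H i) := by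
          rw [AddSubmonoidClass.coe_finset_sum]
          exact Finset.sum_congr rfl fun k _ => rfl
  have hBsuml : ∀ (s : Finset (Fin n)) (u : Fin n → unTensorSpan H) (η : unTensorSpan H),
      B (∑ k ∈ s, u k) η = ∑ k ∈ s, B (u k) η := by
    intro s u η
    induction s using Finset.induction_on with
    | empty => simpa using hB0l η
    | @insert a s ha ih => rw [Finset.sum_insert ha, Finset.sum_insert ha, Badd₁, ih]
  have hBsumr : ∀ (s : Finset (Fin n)) (u : Fin n → unTensorSpan H) (η : unTensorSpan H),
      B η (∑ k ∈ s, u k) = ∑ k ∈ s, B η (u k) := by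
    intro s u η
    induction s using Finset.induction_on with
    | empty => simpa using hB0r η
    | @insert a s ha ih => rw [Finset.sum_insert ha, Finset.sum_insert ha, Badd₂, ih]
  have hBbig : ∀ (d d' : Fin n → ℂ) (u u' : Fin n → unTensorSpan H),
      B (∑ k, d k • u k) (∑ l, d' l • u' l)
        = ∑ k, ∑ l, conj (d k) * d' l * B (u k) (u' l) := by
    intro d d' u u'
    rw [hBsuml]
    refine Finset.sum_congr rfl fun k _ => ?_
    rw [Bsmul₁, hBsumr, Finset.mul_sum]
    refine Finset.sum_congr rfl fun l _ => ?_
    rw [Bsmul₂]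
    ring
  have hBee : ∀ k l, B (e k) (e l) = hform H (x k) (x l) :=
    fun k l => Bh (x k) (x l) (hxu k) (hxu l) (hmemx k) (hmemx l)
  have hBee' : ∀ k l, B (e' k) (e' l) = hform H (x' k) (x' l) :=
    fun k l => Bh (x' k) (x' l) (hx'u k) (hx'u l) (hmemx' k) (hmemx' l)
  have hBright : B ξ ξ = ∑ k, ∑ l, conj (c k) * c l * hform H (x k) (x l) := by
    rw [hξrep, hBbig]
    exact Finset.sum_congr rfl fun k _ => Finset.sum_congr rfl fun l _ => by rw [hBee k l]
  have hBleft : B ⟨M ξ.1, hm⟩ ⟨M ξ.1, hm⟩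
      = ∑ k, ∑ l, conj (c k) * c l
          * hform H (fun i => T i (x k i)) (fun i => T i (x l i)) := by
    rw [hMrep, hBbig]
    refine Finset.sum_congr rfl fun k _ => Finset.sum_congr rfl fun l _ => ?_
    rw [hBee' k l]
    have hTx : hform H (fun i => T i (x k i)) (fun i => T i (x l i))
        = ((p k : ℝ) : ℂ) * (((p l : ℝ)) : ℂ) * hform H (x' k) (x' l) := by
      rw [hform_scale_left H F (fun i => if i ∈ F then ‖T i (x k i)‖ else 1)
        (fun i hi => if_neg hi) _ (x' k) _ (hx'sc k)]
      rw [hform_scale_right H F (fun i => if i ∈ F then ‖T i (x l i)‖ else 1)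
        (fun i hi => if_neg hi) (x' k) _ (x' l) (hx'sc l)]
      have h1 : (∏ i ∈ F, if i ∈ F then ‖T i (x k i)‖ else 1) = p k :=
        Finset.prod_congr rfl fun i hi => if_pos hi
      have h2 : (∏ i ∈ F, if i ∈ F then ‖T i (x l i)‖ else 1) = p l :=
        Finset.prod_congr rfl fun i hi => if_pos hi
      rw [h1, h2]
      ring
    rw [hTx, map_mul, Complex.conj_ofReal]
    ring
  -- the equivalence relation of agreeing in all but finitely many coordinates
  have hrefl : ∀ k, ({i | x k i ≠ x k i} : Set I).Finite := by
    intro k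
    convert Set.finite_empty
    simp
  have hsymm : ∀ k l, ({i | x k i ≠ x l i} : Set I).Finite →
      ({i | x l i ≠ x k i} : Set I).Finite := by
    intro k l h
    refine h.subset ?_
    intro i hi heq
    exact hi heq.symm
  have htrans : ∀ j k l, ({i | x j i ≠ x k i} : Set I).Finite →
      ({i | x k i ≠ x l i} : Set I).Finite → ({i | x j i ≠ x l i} : Set I).Finite := by
    intro j k l h1 h2
    refine (h1.union h2).subset ?_
    intro i hi
    by_cases h : x j i = x k i
    · exact Or.inr (fun he => hi (h.trans he))
    · exact Or.inl h
  have hUfin : (⋃ (k : Fin n), ⋃ (l : Fin n),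
      (if ({i | x k i ≠ x l i} : Set I).Finite then {i | x k i ≠ x l i}
        else (∅ : Set I))).Finite := by
    refine Set.finite_iUnion fun k => Set.finite_iUnion fun l => ?_
    split_ifs with h
    · exact h
    · exact Set.finite_empty
  set S : Finset I := F ∪ hUfin.toFinset with hSdef
  have hFS : F ⊆ S := Finset.subset_union_left
  have hdiffS : ∀ k l, ({i | x k i ≠ x l i} : Set I).Finite →
      ∀ i, i ∉ S → x k i = x l i := by
    intro k l hkl i hiS
    by_contra hne
    apply hiS
    rw [hSdef]
    refine Finset.mem_union_right _ ?_
    rw [Set.Finite.mem_toFinset]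
    exact Set.mem_iUnion.mpr ⟨k, Set.mem_iUnion.mpr ⟨l, by rw [if_pos hkl]; exact hne⟩⟩
  have hFnotS : ∀ i, i ∉ S → i ∉ F := fun i hiS hiF => hiS (hFS hiF)
  -- representatives of equivalence classes
  set rep : Fin n → Fin n := fun k =>
    (Finset.univ.filter (fun l => ({i | x k i ≠ x l i} : Set I).Finite)).min'
      ⟨k, Finset.mem_filter.mpr ⟨Finset.mem_univ k, hrefl k⟩⟩ with hrepdef
  have hrelrep : ∀ k, ({i | x k i ≠ x (rep k) i} : Set I).Finite := fun k =>
    (Finset.mem_filter.mp ((Finset.univ.filter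
      (fun l => ({i | x k i ≠ x l i} : Set I).Finite)).min'_mem _)).2
  have hrep_eq : ∀ k l, ({i | x k i ≠ x l i} : Set I).Finite ↔ rep k = rep l := by
    intro k l
    constructor
    · intro h
      refine le_antisymm ?_ ?_
      · exact Finset.min'_le
          (Finset.univ.filter (fun m => ({i | x k i ≠ x m i} : Set I).Finite)) (rep l)
          (Finset.mem_filter.mpr
            ⟨Finset.mem_univ _, htrans k l (rep l) h (hrelrep l)⟩)
      · exact Finset.min'_le
          (Finset.univ.filter (fun m => ({i | x l i ≠ x m i} : Set I).Finite)) (rep k)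
          (Finset.mem_filter.mpr
            ⟨Finset.mem_univ _, htrans l k (rep k) (hsymm k l h) (hrelrep k)⟩)
    · intro h
      have h2 := hrelrep l
      rw [← h] at h2
      exact htrans k (rep k) l (hrelrep k) (hsymm l (rep k) h2)
  set E : Matrix (Fin n) (Fin n) ℂ := Matrix.of fun k l =>
    if ({i | x k i ≠ x l i} : Set I).Finite then 1 else 0 with hEdef
  have hEgram : GramLike E := by
    refine ⟨n, fun k a => if rep k = a then 1 else 0, fun k l => ?_⟩
    have hterm : ∀ a : Fin n, conj (if rep k = a then (1:ℂ) else 0)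
        * (if rep l = a then 1 else 0)
        = if rep k = a then (if rep l = a then (1:ℂ) else 0) else 0 := by
      intro a
      split_ifs <;> simp
    rw [Finset.sum_congr rfl fun a _ => hterm a,
      Finset.sum_ite_eq Finset.univ (rep k) (fun a => if rep l = a then (1:ℂ) else 0)]
    simp only [Finset.mem_univ, if_true]
    by_cases h : ({i | x k i ≠ x l i} : Set I).Finite
    · have h1 : E k l = 1 := by simp only [hEdef, Matrix.of_apply, if_pos h]
      rw [h1, if_pos ((hrep_eq k l).mp h).symm]
    · have h0 : E k l = 0 := by simp only [hEdef, Matrix.of_apply, if_neg h]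
      rw [h0, if_neg (fun he => h ((hrep_eq k l).mpr he.symm))]
  set G : I → Matrix (Fin n) (Fin n) ℂ :=
    fun i => Matrix.of fun k l => (inner ℂ (x k i) (x l i) : ℂ) with hGdef
  set G' : I → Matrix (Fin n) (Fin n) ℂ :=
    fun i => Matrix.of fun k l => (inner ℂ (T i (x k i)) (T i (x l i)) : ℂ) with hG'def
  have hGgram : ∀ i ∈ S, GramLike (G i) := fun i _ => gramLike_innerGram (fun k => x k i)
  have hG'gram : ∀ i ∈ F, GramLike (G' i) :=
    fun i _ => gramLike_innerGram (fun k => T i (x k i))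
  have hdiffgram : ∀ i ∈ F, GramLike (Matrix.of fun k l =>
      (((‖T i‖ ^ 2 : ℝ)) : ℂ) * G i k l - G' i k l) :=
    fun i _ => gramLike_opDiff (T i) (fun k => x k i)
  have heqFS : ∀ i ∈ S, i ∉ F → G' i = G i := by
    intro i _ hiF
    ext k l
    simp only [hG'def, hGdef, Matrix.of_apply]
    exact hTin i hiF _ _
  have hinner_one : ∀ k l i, x k i = x l i → (inner ℂ (x k i) (x l i) : ℂ) = 1 := by
    intro k l i he
    rw [he, inner_self_eq_norm_sq_to_K, hxu l i]
    norm_num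
  have hA : ∀ k l, hform H (x k) (x l) = E k l * ∏ i ∈ S, G i k l := by
    intro k l
    by_cases h : ({i | x k i ≠ x l i} : Set I).Finite
    · have h1 : E k l = 1 := by simp only [hEdef, Matrix.of_apply, if_pos h]
      rw [h1, one_mul]
      exact hform_eq_prod H S (x k) (x l) (fun i hi => hinner_one k l i (hdiffS k l h i hi))
    · have h0 : E k l = 0 := by simp only [hEdef, Matrix.of_apply, if_neg h]
      rw [h0, zero_mul]
      refine hform_eq_zero H _ _ ?_
      intro hfin
      apply h
      refine hfin.subset ?_
      intro i hi
      exact fun he => hi ((unit_inner_eq_one_iff (hxu k i) (hxu l i)).mp he)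
  have hBm : ∀ k l, hform H (fun i => T i (x k i)) (fun i => T i (x l i))
      = E k l * ∏ i ∈ S, G' i k l := by
    intro k l
    by_cases h : ({i | x k i ≠ x l i} : Set I).Finite
    · have h1 : E k l = 1 := by simp only [hEdef, Matrix.of_apply, if_pos h]
      rw [h1, one_mul]
      refine hform_eq_prod H S _ _ ?_
      intro i hi
      have hiF : i ∉ F := hFnotS i hi
      calc (inner ℂ (T i (x k i)) (T i (x l i)) : ℂ) = inner ℂ (x k i) (x l i) := hTin i hiF _ _
        _ = 1 := hinner_one k l i (hdiffS k l h i hi)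
    · have h0 : E k l = 0 := by simp only [hEdef, Matrix.of_apply, if_neg h]
      rw [h0, zero_mul]
      refine hform_eq_zero H _ _ ?_
      intro hfin
      apply h
      refine ((hfin.union F.finite_toSet).subset ?_)
      intro i hi
      by_cases hiF : i ∈ F
      · exact Or.inr hiF
      · left
        show (inner ℂ (T i (x k i)) (T i (x l i)) : ℂ) ≠ 1
        rw [hTin i hiF]
        exact fun he => hi ((unit_inner_eq_one_iff (hxu k i) (hxu l i)).mp he)
  rw [hBleft, hBright]
  have hL2 : (∑ k, ∑ l, conj (c k) * c l
        * hform H (fun i => T i (x k i)) (fun i => T i (x l i)))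
      = ∑ k, ∑ l, conj (c k) * c l * (E k l * ∏ i ∈ S, G' i k l) :=
    Finset.sum_congr rfl fun k _ => Finset.sum_congr rfl fun l _ => by rw [hBm k l]
  have hR2 : (∑ k, ∑ l, conj (c k) * c l * hform H (x k) (x l))
      = ∑ k, ∑ l, conj (c k) * c l * (E k l * ∏ i ∈ S, G i k l) :=
    Finset.sum_congr rfl fun k _ => Finset.sum_congr rfl fun l _ => by rw [hA k l]
  rw [hL2, hR2]
  exact gram_key E hEgram (fun i => ‖T i‖ ^ 2) (fun i => sq_nonneg _) S G hGgram c
    F hFS G' hG'gram hdiffgram heqFS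
end

section
/- Let (A_i)_{i∈I} be unital *-algebras over ℂ, let (H_i)_{i∈I} be nonzero complex Hilbert spaces, and let Ψ_i : A_i → (H_i →L[ℂ] H_i) be injective unital *-algebra homomorphisms (unital ℂ-algebra homomorphisms satisfying Ψ_i(a*) = Ψ_i(a)†, where † is the Hilbert-space adjoint). Let Ψ : ⨂_{i∈I} A_i → Module.End ℂ (⨂_{i∈I} H_i) be the ℂ-algebra homomorphism determined by Ψ(⊗a)(⊗x) = ⊗(Ψ_i(a_i)(x_i)). Define ⨂^ut_{i∈I} A_i to be the ℂ-linear span in ⨂_{i∈I} A_i of {⊗a : a ∈ Π_{i∈I} A_i such that there exists u ∈ Π_{i∈I} unitary A_i with a_i = u_i for all but finitely many i}. If b ∈ ⨂^ut_{i∈I} A_i and Ψ(b)(ξ) = 0 for every ξ ∈ ⨂^un_{i∈I} H_i, then b = 0. -/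
open scoped TensorProduct

/-- The subalgebra `⨂^ut_{i∈I} A_i`: the span in `⨂_{i∈I} A_i` of the elementary tensors
`⊗a` where `a` agrees with some family of unitaries at all but finitely many coordinates. -/
noncomputable def utTensorSpan {I : Type*} (A : I → Type*) [∀ i, Ring (A i)]
    [∀ i, Algebra ℂ (A i)] [∀ i, StarRing (A i)] [∀ i, StarModule ℂ (A i)] :
    Submodule ℂ (⨂[ℂ] i, A i) :=
  Submodule.span ℂ {t | ∃ a : ∀ i, A i,
    (∃ u : ∀ i, unitary (A i), {i | a i ≠ (u i : A i)}.Finite) ∧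
    t = PiTensorProduct.tprod ℂ a}

open scoped InnerProductSpace ComplexConjugate

namespace UtAux



variable {I : Type*}

open scoped Classical in
/-- Product of the entries of `c` differing from 1, if they are finitely many; else 0. -/
noncomputable def F1fun (c : I → ℂ) : ℂ :=
  if h : {i | c i ≠ 1}.Finite then ∏ i ∈ h.toFinset, c i else 0

lemma F1fun_eq_prod {c : I → ℂ} {E : Finset I} (h : ∀ i ∉ E, c i = 1) :
    F1fun c = ∏ i ∈ E, c i := by
  classical
  have hfin : {i | c i ≠ 1}.Finite := by
    apply E.finite_toSet.subset
    intro i hi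
    by_contra hE
    exact hi (h i hE)
  rw [F1fun, dif_pos hfin]
  apply Finset.prod_subset
  · intro i hi
    rw [Set.Finite.mem_toFinset] at hi
    by_contra hE
    exact hi (h i hE)
  · intro i _ hi
    rw [Set.Finite.mem_toFinset] at hi
    simpa using hi

lemma F1fun_eq_zero {c : I → ℂ} (h : {i | c i ≠ 1}.Infinite) : F1fun c = 0 := by
  rw [F1fun, dif_neg h]

lemma F1fun_update (m : I → ℂ) (i : I) [DecidableEq I] :
    ∃ C : ℂ, ∀ x : ℂ, F1fun (Function.update m i x) = x * C := by
  classical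
  by_cases h : ({j | m j ≠ 1} \ {i}).Finite
  · refine ⟨∏ j ∈ h.toFinset, m j, fun x => ?_⟩
    have hi : i ∉ h.toFinset := by
      rw [Set.Finite.mem_toFinset]
      simp
    have hsub : ∀ j ∉ insert i h.toFinset, Function.update m i x j = 1 := by
      intro j hj
      rw [Finset.mem_insert, not_or] at hj
      rw [Function.update_of_ne hj.1]
      by_contra hne
      exact hj.2 (by rw [Set.Finite.mem_toFinset]; exact ⟨hne, hj.1⟩)
    rw [F1fun_eq_prod hsub, Finset.prod_insert hi, Function.update_self]
    congr 1
    apply Finset.prod_congr rfl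
    intro j hj
    have : j ≠ i := by
      rintro rfl
      exact hi hj
    rw [Function.update_of_ne this]
  · refine ⟨0, fun x => ?_⟩
    rw [mul_zero]
    apply F1fun_eq_zero
    intro hfin
    apply h
    apply hfin.subset
    rintro j ⟨hj1, hj2⟩
    simp only [Set.mem_singleton_iff] at hj2
    simp only [Set.mem_setOf_eq, Function.update_of_ne hj2]
    exact hj1

/-- The multilinear functional on `∀ _ : I, ℂ` sending `c` to the product of its
entries different from `1` (or `0` if there are infinitely many). -/
noncomputable def prodML : MultilinearMap ℂ (fun _ : I => ℂ) ℂ where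
  toFun := F1fun
  map_update_add' m i x y := by
    obtain ⟨C, hC⟩ := F1fun_update m i
    simp [hC, add_mul]
  map_update_smul' m i c x := by
    obtain ⟨C, hC⟩ := F1fun_update m i
    simp [hC, smul_eq_mul]
    ring

/-- The induced linear functional on `⨂[ℂ] _ : I, ℂ`. -/
noncomputable def phi1 : (⨂[ℂ] _ : I, ℂ) →ₗ[ℂ] ℂ := PiTensorProduct.lift prodML

lemma phi1_tprod_eq_prod {c : I → ℂ} {E : Finset I} (h : ∀ i ∉ E, c i = 1) :
    phi1 (PiTensorProduct.tprod ℂ c) = ∏ i ∈ E, c i := by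
  rw [phi1, PiTensorProduct.lift.tprod]
  exact F1fun_eq_prod h

lemma phi1_tprod_eq_zero {c : I → ℂ} (h : {i | c i ≠ 1}.Infinite) :
    phi1 (PiTensorProduct.tprod ℂ c) = 0 := by
  rw [phi1, PiTensorProduct.lift.tprod]
  exact F1fun_eq_zero h



variable {V : Type*} [NormedAddCommGroup V] [NormedSpace ℂ V] [Nontrivial V]

lemma exists_ne_zero_forall_ne {K : Type*} (s : Finset K) (L : K → (V →L[ℂ] V))
    (hL : ∀ k ∈ s, L k ≠ 0) : ∃ x : V, x ≠ 0 ∧ ∀ k ∈ s, L k x ≠ 0 := by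
  classical
  induction s using Finset.induction_on with
  | empty =>
    obtain ⟨x, hx⟩ := exists_ne (0 : V)
    exact ⟨x, hx, by simp⟩
  | @insert a s ha ih =>
    obtain ⟨x, hx0, hx⟩ := ih (fun k hk => hL k (Finset.mem_insert_of_mem hk))
    by_cases hax : L a x ≠ 0
    · exact ⟨x, hx0, by
        intro k hk
        rcases Finset.mem_insert.mp hk with rfl | hk
        · exact hax
        · exact hx k hk⟩
    push_neg at hax
    have hLa : L a ≠ 0 := hL a (Finset.mem_insert_self a s)
    have hy : ∃ y, L a y ≠ 0 := by
      by_contra hy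
      push_neg at hy
      exact hLa (ContinuousLinearMap.ext fun y => hy y)
    obtain ⟨y, hy⟩ := hy
    have hbadfin : (({0} : Set ℂ) ∪ ⋃ k ∈ s, {ε : ℂ | L k x + ε • L k y = 0}).Finite := by
      apply (Set.finite_singleton 0).union
      apply Set.Finite.biUnion s.finite_toSet
      intro k hk
      apply Set.Subsingleton.finite
      intro ε₁ h₁ ε₂ h₂
      simp only [Set.mem_setOf_eq] at h₁ h₂
      have hky : L k y ≠ 0 := by
        intro h0
        rw [h0, smul_zero, add_zero] at h₁
        exact hx k hk h₁
      have : (ε₁ - ε₂) • L k y = 0 := by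
        rw [sub_smul]
        rw [← h₁] at h₂
        linear_combination (norm := module) -h₂
      rcases smul_eq_zero.mp this with h | h
      · exact sub_eq_zero.mp h
      · exact absurd h hky
    obtain ⟨ε, hε⟩ := (hbadfin.infinite_compl).nonempty
    simp only [Set.mem_compl_iff, Set.mem_union, Set.mem_singleton_iff, Set.mem_iUnion,
      not_or, not_exists, Set.mem_setOf_eq] at hε
    obtain ⟨hε0, hεs⟩ := hε
    have haxy : L a (x + ε • y) ≠ 0 := by
      rw [map_add, hax, zero_add, map_smul]
      exact smul_ne_zero hε0 hy
    refine ⟨x + ε • y, ?_, ?_⟩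
    · intro h0
      rw [h0, map_zero] at haxy
      exact haxy rfl
    · intro k hk
      rcases Finset.mem_insert.mp hk with rfl | hk
      · exact haxy
      · intro h0
        rw [map_add, map_smul] at h0
        exact hεs k hk h0

lemma exists_unit_forall_ne {K : Type*} (s : Finset K) (L : K → (V →L[ℂ] V))
    (hL : ∀ k ∈ s, L k ≠ 0) : ∃ x : V, ‖x‖ = 1 ∧ ∀ k ∈ s, L k x ≠ 0 := by
  obtain ⟨x, hx0, hx⟩ := exists_ne_zero_forall_ne s L hL
  have hn : (‖x‖ : ℂ) ≠ 0 := by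
    simpa using norm_ne_zero_iff.mpr hx0
  refine ⟨(‖x‖ : ℂ)⁻¹ • x, ?_, ?_⟩
  · rw [norm_smul, norm_inv]
    simp only [Complex.norm_real, Real.norm_eq_abs, abs_norm]
    field_simp
  · intro k hk
    rw [map_smul]
    exact smul_ne_zero (inv_ne_zero hn) (hx k hk)




/-- Core finite-window lemma. -/
lemma fin_key {I : Type*} (A : I → Type*) [∀ i, Ring (A i)] [∀ i, Algebra ℂ (A i)]
    (H : I → Type*) [∀ i, NormedAddCommGroup (H i)] [∀ i, InnerProductSpace ℂ (H i)]
    [∀ i, CompleteSpace (H i)]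
    (Ψ : ∀ i, A i →ₐ[ℂ] (H i →L[ℂ] H i)) (hΨinj : ∀ i, Function.Injective (Ψ i))
    {K : Type*} (s : Finset K) (x0 y0 : ∀ i, H i) (hx0 : ∀ i, ‖x0 i‖ = 1)
    (T : Finset I) :
    ∀ (c : K → ℂ) (a : K → ∀ i, A i),
    (∀ k ∈ s, ∀ l ∈ s, ∀ i, i ∉ T → a k i = a l i) →
    (∀ x y : ∀ i, H i, (∀ i, ‖x i‖ = 1) → (∀ i ∉ T, x i = x0 i) → (∀ i ∉ T, y i = y0 i) →
      ∑ k ∈ s, c k * ∏ i ∈ T, ⟪y i, Ψ i (a k i) (x i)⟫_ℂ = 0) →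
    ∑ k ∈ s, c k • PiTensorProduct.tprod ℂ (a k) = 0 := by
  classical
  induction T using Finset.induction_on with
  | empty =>
    intro c a hagree hyp
    rcases s.eq_empty_or_nonempty with rfl | ⟨k₀, hk₀⟩
    · simp
    · have hall : ∀ k ∈ s, a k = a k₀ := fun k hk =>
        funext fun i => hagree k hk k₀ hk₀ i (Finset.notMem_empty i)
      have hsum : ∑ k ∈ s, c k = 0 := by
        simpa using hyp x0 y0 hx0 (fun i _ => rfl) (fun i _ => rfl)
      calc ∑ k ∈ s, c k • PiTensorProduct.tprod ℂ (a k)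
          = ∑ k ∈ s, c k • PiTensorProduct.tprod ℂ (a k₀) :=
            Finset.sum_congr rfl fun k hk => by rw [hall k hk]
        _ = (∑ k ∈ s, c k) • PiTensorProduct.tprod ℂ (a k₀) := by rw [Finset.sum_smul]
        _ = 0 := by rw [hsum, zero_smul]
  | @insert j T₀ hj ih =>
    intro c a hagree hyp
    set B := Module.Basis.ofVectorSpace ℂ (A j) with hB
    set F := s.biUnion (fun k => (B.repr (a k j)).support) with hF
    have key : ∀ β ∈ F, ∑ k ∈ s,
        (c k * B.repr (a k j) β) • PiTensorProduct.tprod ℂ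
          (Function.update (a k) j (B β)) = 0 := by
      intro β _
      refine ih _ _ ?_ ?_
      · -- agreement off T₀
        intro k hk l hl i hi
        by_cases hij : i = j
        · subst hij; simp
        · rw [Function.update_of_ne hij, Function.update_of_ne hij]
          exact hagree k hk l hl i (by simp [Finset.mem_insert, hij, hi])
      · -- the new scalar hypothesis, via a duality argument
        intro x y hx hxa hya
        have hprodrw : ∀ k, (∏ i ∈ T₀, ⟪y i, Ψ i (Function.update (a k) j (B β) i) (x i)⟫_ℂ)
            = ∏ i ∈ T₀, ⟪y i, Ψ i (a k i) (x i)⟫_ℂ := by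
          intro k
          refine Finset.prod_congr rfl fun i hi => ?_
          have hij : i ≠ j := by rintro rfl; exact hj hi
          rw [Function.update_of_ne hij]
        simp only [hprodrw]
        set p : K → ℂ := fun k => c k * ∏ i ∈ T₀, ⟪y i, Ψ i (a k i) (x i)⟫_ℂ with hp
        have hyp' : ∀ v w : H j, ‖v‖ = 1 → ∑ k ∈ s, p k * ⟪w, Ψ j (a k j) v⟫_ℂ = 0 := by
          intro v w hv
          have h1 := hyp (Function.update x j v) (Function.update y j w)
            (fun i => by
              by_cases hij : i = j
              · subst hij; simpa using hv
              · rw [Function.update_of_ne hij]; exact hx i)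
            (fun i hi => by
              have hij : i ≠ j := by rintro rfl; exact hi (Finset.mem_insert_self _ _)
              rw [Function.update_of_ne hij]
              exact hxa i (fun h => hi (Finset.mem_insert_of_mem h)))
            (fun i hi => by
              have hij : i ≠ j := by rintro rfl; exact hi (Finset.mem_insert_self _ _)
              rw [Function.update_of_ne hij]
              exact hya i (fun h => hi (Finset.mem_insert_of_mem h)))
          rw [← h1]
          refine Finset.sum_congr rfl fun k hk => ?_
          rw [Finset.prod_insert hj]
          simp only [Function.update_self]
          have : (∏ i ∈ T₀, ⟪Function.update y j w i,
              Ψ i (a k i) (Function.update x j v i)⟫_ℂ)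
              = ∏ i ∈ T₀, ⟪y i, Ψ i (a k i) (x i)⟫_ℂ := by
            refine Finset.prod_congr rfl fun i hi => ?_
            have hij : i ≠ j := by rintro rfl; exact hj hi
            rw [Function.update_of_ne hij, Function.update_of_ne hij]
          rw [this, hp]
          ring
        -- duality in Euclidean space over ↥s
        set E := EuclideanSpace ℂ (↥s) with hE
        set S : Set E := {q | ∃ v w : H j, ‖v‖ = 1 ∧
          ∀ k : ↥s, q k = ⟪w, Ψ j (a (↑k) j) v⟫_ℂ} with hS
        set U : Submodule ℂ E := Submodule.span ℂ S with hU
        set t : E := WithLp.toLp 2 (fun k : ↥s => B.repr (a (↑k) j) β) with ht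
        have htU : t ∈ U := by
          rw [← Submodule.orthogonal_orthogonal U]
          rw [Submodule.mem_orthogonal]
          intro q hq
          rw [Submodule.mem_orthogonal] at hq
          have h1 : ∀ v w : H j, ‖v‖ = 1 →
              ∑ k : ↥s, ⟪Ψ j (a (↑k) j) v, w⟫_ℂ * q k = 0 := by
            intro v w hv
            set u : E := WithLp.toLp 2 (fun k : ↥s => ⟪w, Ψ j (a (↑k) j) v⟫_ℂ) with hu
            have huS : u ∈ S := ⟨v, w, hv, fun k => rfl⟩
            have h2 := hq u (Submodule.subset_span huS)
            rw [PiLp.inner_apply] at h2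
            simp only [RCLike.inner_apply] at h2
            rw [← h2]
            refine Finset.sum_congr rfl fun k _ => ?_
            rw [← inner_conj_symm]; exact mul_comm _ _
          set a' : A j := ∑ k : ↥s, (starRingEnd ℂ) (q k) • a (↑k) j with ha'
          have ha'v : ∀ v : H j, ‖v‖ = 1 → Ψ j a' v = 0 := by
            intro v hv
            have hinner : ∀ w, ⟪Ψ j a' v, w⟫_ℂ = 0 := by
              intro w
              have hav : Ψ j a' v = ∑ k : ↥s, (starRingEnd ℂ) (q k) • Ψ j (a (↑k) j) v := by
                rw [ha', map_sum]
                rw [ContinuousLinearMap.sum_apply]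
                refine Finset.sum_congr rfl fun k _ => ?_
                rw [map_smul, ContinuousLinearMap.smul_apply]
              rw [hav, sum_inner]
              rw [← h1 v w hv]
              refine Finset.sum_congr rfl fun k _ => ?_
              rw [inner_smul_left]
              simp [mul_comm]
            have := hinner (Ψ j a' v)
            rwa [inner_self_eq_zero] at this
          have ha'0 : a' = 0 := by
            apply hΨinj j
            rw [map_zero]
            ext v
            rw [ContinuousLinearMap.zero_apply]
            by_cases hv : v = 0
            · rw [hv, map_zero]
            · have hnv : (‖v‖ : ℂ) ≠ 0 := by
                simpa using norm_ne_zero_iff.mpr hv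
              have hv1 : ‖(‖v‖ : ℂ)⁻¹ • v‖ = 1 := by
                rw [norm_smul, norm_inv, Complex.norm_real, Real.norm_eq_abs, abs_norm]
                field_simp
              have := ha'v _ hv1
              rw [map_smul] at this
              rcases smul_eq_zero.mp this with h | h
              · exact absurd h (inv_ne_zero hnv)
              · exact h
          -- conclude the inner product with t vanishes
          rw [PiLp.inner_apply]
          simp only [RCLike.inner_apply, ht, PiLp.toLp_apply]
          have : ∑ k : ↥s, (starRingEnd ℂ) (q k) * B.repr (a (↑k) j) β
              = B.repr a' β := by
            rw [ha', map_sum, Finsupp.coe_finset_sum, Finset.sum_apply]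
            refine Finset.sum_congr rfl fun k _ => ?_
            rw [map_smul]
            simp [smul_eq_mul]
          rw [← Finset.sum_congr rfl fun k _ => mul_comm ((starRingEnd ℂ) (q k)) (B.repr (a (↑k) j) β), this, ha'0, map_zero]
          simp
        -- the functional q ↦ ∑ p k * q k kills U
        have hadd : ∀ (q r : E) (k : ↥s), (q + r) k = q k + r k := fun _ _ _ => rfl
        have hsmul : ∀ (r : ℂ) (q : E) (k : ↥s), (r • q) k = r * q k := fun _ _ _ => rfl
        set P : E →ₗ[ℂ] ℂ :=
          { toFun := fun q => ∑ k : ↥s, p (↑k) * q k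
            map_add' := fun q r => by
              simp only [hadd, mul_add]
              rw [Finset.sum_add_distrib]
            map_smul' := fun r q => by
              simp only [hsmul, smul_eq_mul, RingHom.id_apply]
              rw [Finset.mul_sum]
              refine Finset.sum_congr rfl fun k _ => ?_
              ring } with hP
        have hPU : U ≤ LinearMap.ker P := by
          rw [hU, Submodule.span_le]
          rintro q ⟨v, w, hv, hqk⟩
          simp only [SetLike.mem_coe, LinearMap.mem_ker, hP, LinearMap.coe_mk, AddHom.coe_mk]
          rw [← hyp' v w hv, ← Finset.sum_coe_sort s (fun k => p k * ⟪w, Ψ j (a k j) v⟫_ℂ)]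
          exact Finset.sum_congr rfl fun k _ => by rw [hqk k]
        have hPt : ∑ k : ↥s, p (↑k) * t k = 0 := hPU htU
        rw [← Finset.sum_coe_sort s
          (fun k => (c k * B.repr (a k j) β) * ∏ i ∈ T₀, ⟪y i, Ψ i (a k i) (x i)⟫_ℂ)]
        rw [← hPt]
        refine Finset.sum_congr rfl fun k _ => ?_
        rw [hp, ht]
        ring
    -- expand each elementary tensor over the basis in slot j
    have expand : ∀ k ∈ s, (PiTensorProduct.tprod ℂ (a k) : ⨂[ℂ] i, A i) =
        ∑ β ∈ F, B.repr (a k j) β • PiTensorProduct.tprod ℂ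
          (Function.update (a k) j (B β)) := by
      intro k hk
      have hsupp : (B.repr (a k j)).support ⊆ F :=
        Finset.subset_biUnion_of_mem (fun l => (B.repr (a l j)).support) hk
      have hrepr : a k j = ∑ β ∈ F, B.repr (a k j) β • B β := by
        conv_lhs => rw [← B.linearCombination_repr (a k j)]
        rw [Finsupp.linearCombination_apply, Finsupp.sum]
        refine Finset.sum_subset hsupp fun β _ hβ => ?_
        rw [Finsupp.notMem_support_iff.mp hβ, zero_smul]
      conv_lhs => rw [← Function.update_eq_self j (a k), hrepr]
      rw [MultilinearMap.map_update_sum]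
      refine Finset.sum_congr rfl fun β _ => ?_
      rw [MultilinearMap.map_update_smul]
    calc ∑ k ∈ s, c k • PiTensorProduct.tprod ℂ (a k)
        = ∑ k ∈ s, ∑ β ∈ F, (c k * B.repr (a k j) β) • PiTensorProduct.tprod ℂ
            (Function.update (a k) j (B β)) := by
          refine Finset.sum_congr rfl fun k hk => ?_
          rw [expand k hk, Finset.smul_sum]
          refine Finset.sum_congr rfl fun β _ => ?_
          rw [smul_smul]
      _ = ∑ β ∈ F, ∑ k ∈ s, (c k * B.repr (a k j) β) • PiTensorProduct.tprod ℂ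
            (Function.update (a k) j (B β)) := Finset.sum_comm
      _ = 0 := Finset.sum_eq_zero key


end UtAux

/-- If `Ψ_i : A_i → B(H_i)` are injective unital `*`-representations, then the induced
tensor-product representation of `⨂_{i∈I} A_i` on `⨂_{i∈I} H_i` is injective on
`⨂^ut_{i∈I} A_i`, already when tested against vectors in `⨂^un_{i∈I} H_i`. -/
theorem piTensor_representation_injective_on_ut {I : Type*} [Infinite I]
    (A : I → Type*) [∀ i, Ring (A i)] [∀ i, Algebra ℂ (A i)]
    [∀ i, StarRing (A i)] [∀ i, StarModule ℂ (A i)]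
    (H : I → Type*) [∀ i, NormedAddCommGroup (H i)] [∀ i, InnerProductSpace ℂ (H i)]
    [∀ i, CompleteSpace (H i)] [∀ i, Nontrivial (H i)]
    (Ψ : ∀ i, A i →ₐ[ℂ] (H i →L[ℂ] H i))
    (hΨstar : ∀ i (a : A i), Ψ i (star a) = ContinuousLinearMap.adjoint (Ψ i a))
    (hΨinj : ∀ i, Function.Injective (Ψ i))
    (Θ : (⨂[ℂ] i, A i) →ₐ[ℂ] Module.End ℂ (⨂[ℂ] i, H i))
    (hΘ : ∀ (a : ∀ i, A i) (x : ∀ i, H i),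
      Θ (PiTensorProduct.tprod ℂ a) (PiTensorProduct.tprod ℂ x) =
        PiTensorProduct.tprod ℂ (fun i => Ψ i (a i) (x i)))
    (b : ⨂[ℂ] i, A i) (hb : b ∈ utTensorSpan A)
    (hzero : ∀ ξ ∈ unTensorSpan H, Θ b ξ = 0) :
    b = 0 := by
  unfold utTensorSpan at hb
  unfold unTensorSpan at hzero
  classical
  obtain ⟨n, f, g, hrep⟩ := Submodule.mem_span_set'.mp hb
  have hg : ∀ k, ∃ (a : ∀ i, A i) (u : ∀ i, unitary (A i)),
      {i | a i ≠ (u i : A i)}.Finite ∧ (g k : ⨂[ℂ] i, A i) = PiTensorProduct.tprod ℂ a := by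
    intro k
    obtain ⟨a, ⟨u, hu⟩, ht⟩ := (g k).2
    exact ⟨a, u, hu, ht⟩
  choose a u hfin hgeq using hg
  have hb' : b = ∑ k : Fin n, f k • PiTensorProduct.tprod ℂ (a k) := by
    rw [← hrep]
    exact Finset.sum_congr rfl fun k _ => by rw [hgeq k]
  -- the "difference" sets and the relation of being almost-everywhere equal
  set D : Fin n → Fin n → Set I := fun k l => {i | a k i ≠ a l i} with hD
  set Rel : Fin n → Fin n → Prop := fun k l => (D k l).Finite with hRelDef
  have hRrefl : ∀ k, Rel k k := fun k =>
    Set.Finite.subset Set.finite_empty (fun i hi => (hi rfl).elim)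
  have hRsymm : ∀ {k l}, Rel k l → Rel l k := by
    intro k l h
    apply h.subset
    intro i hi
    exact Ne.symm hi
  have hRtrans : ∀ {k l m}, Rel k l → Rel l m → Rel k m := by
    intro k l m h1 h2
    apply (h1.union h2).subset
    intro i hi
    by_contra hcon
    simp only [Set.mem_union, hD, Set.mem_setOf_eq, not_or, not_not] at hcon
    exact hi (hcon.1.trans hcon.2)
  -- the finite bad window
  set T : Set I := (⋃ k, {i | a k i ≠ (u k i : A i)}) ∪
      (⋃ k, ⋃ l, if Rel k l then D k l else ∅) with hTdef
  have hT : T.Finite := by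
    apply Set.Finite.union
    · exact Set.finite_iUnion hfin
    · apply Set.finite_iUnion
      intro k
      apply Set.finite_iUnion
      intro l
      by_cases h : Rel k l
      · rw [if_pos h]; exact h
      · rw [if_neg h]; exact Set.finite_empty
  have hTu : ∀ (k : Fin n) (i : I), i ∉ T → a k i = (u k i : A i) := by
    intro k i hi
    by_contra hne
    exact hi (Set.mem_union_left _ (Set.mem_iUnion.mpr ⟨k, hne⟩))
  have hTrel : ∀ k l, Rel k l → ∀ i, i ∉ T → a k i = a l i := by
    intro k l h i hi
    by_contra hne
    refine hi (Set.mem_union_right _ (Set.mem_iUnion.mpr ⟨k, Set.mem_iUnion.mpr ⟨l, ?_⟩⟩))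
    rw [if_pos h]
    exact hne
  -- unitarity facts
  have huu : ∀ (k : Fin n) (i : I), star ((u k i : A i)) * (u k i : A i) = 1 :=
    fun k i => (Unitary.mem_iff.mp (u k i).2).1
  have hinner : ∀ (i : I) (v : A i), star v * v = 1 →
      ∀ x y : H i, ⟪Ψ i v x, Ψ i v y⟫_ℂ = ⟪x, y⟫_ℂ := by
    intro i v hv x y
    have h1 : Ψ i (star v) (Ψ i v x) = x := by
      have h2 : Ψ i (star v) * Ψ i v = 1 := by
        rw [← map_mul, hv, map_one]
      calc Ψ i (star v) (Ψ i v x) = (Ψ i (star v) * Ψ i v) x := by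
            rw [ContinuousLinearMap.mul_apply]
        _ = x := by rw [h2, ContinuousLinearMap.one_apply]
    calc ⟪Ψ i v x, Ψ i v y⟫_ℂ
        = ⟪ContinuousLinearMap.adjoint (Ψ i v) (Ψ i v x), y⟫_ℂ :=
          (ContinuousLinearMap.adjoint_inner_left (Ψ i v) y (Ψ i v x)).symm
      _ = ⟪x, y⟫_ℂ := by rw [← hΨstar, h1]
  have hnorm : ∀ (i : I) (v : A i), star v * v = 1 → ∀ x : H i, ‖Ψ i v x‖ = ‖x‖ := by
    intro i v hv x
    have h1 := hinner i v hv x x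
    rw [inner_self_eq_norm_sq_to_K, inner_self_eq_norm_sq_to_K] at h1
    have h2 : ‖Ψ i v x‖ ^ 2 = ‖x‖ ^ 2 := by exact_mod_cast h1
    nlinarith [norm_nonneg (Ψ i v x), norm_nonneg x]
  -- per-class vanishing
  have class_zero : ∀ k₀ : Fin n,
      ∑ k ∈ Finset.univ.filter (fun k => Rel k k₀),
        f k • PiTensorProduct.tprod ℂ (a k) = 0 := by
    intro k₀
    have hgood : ∀ i : I, ∃ x : H i, ‖x‖ = 1 ∧
        ∀ k : Fin n, a k i ≠ a k₀ i → Ψ i (a k₀ i) x ≠ Ψ i (a k i) x := by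
      intro i
      have hLne : ∀ k ∈ Finset.univ.filter (fun k : Fin n => a k i ≠ a k₀ i),
          Ψ i (a k₀ i) - Ψ i (a k i) ≠ 0 := by
        intro k hk h0
        have hk' : a k i ≠ a k₀ i := (Finset.mem_filter.mp hk).2
        exact hk' (hΨinj i (sub_eq_zero.mp h0)).symm
      obtain ⟨x, hx1, hx2⟩ := UtAux.exists_unit_forall_ne
        (Finset.univ.filter (fun k : Fin n => a k i ≠ a k₀ i))
        (fun k => Ψ i (a k₀ i) - Ψ i (a k i)) hLne
      refine ⟨x, hx1, fun k hk heq => ?_⟩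
      have h3 := hx2 k (Finset.mem_filter.mpr ⟨Finset.mem_univ k, hk⟩)
      apply h3
      rw [ContinuousLinearMap.sub_apply, heq, sub_self]
    choose x0 hx01 hx0g using hgood
    set y0 : ∀ i, H i := fun i => Ψ i (a k₀ i) (x0 i) with hy0
    apply UtAux.fin_key A H Ψ hΨinj _ x0 y0 hx01 hT.toFinset f a
    · -- agreement off the window
      intro k hk l hl i hi
      rw [Set.Finite.mem_toFinset] at hi
      exact hTrel k l (hRtrans (Finset.mem_filter.mp hk).2
        (hRsymm (Finset.mem_filter.mp hl).2)) i hi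
    · -- the scalar hypothesis, from hzero by compression
      intro x y hx hxx0 hyy0
      have hxx0' : ∀ i, i ∉ T → x i = x0 i := fun i hi =>
        hxx0 i (fun h => hi (hT.mem_toFinset.mp h))
      have hyy0' : ∀ i, i ∉ T → y i = y0 i := fun i hi =>
        hyy0 i (fun h => hi (hT.mem_toFinset.mp h))
      have h0 : Θ b (PiTensorProduct.tprod ℂ x) = 0 :=
        hzero _ (Submodule.subset_span ⟨x, hx, rfl⟩)
      have h1 : ∑ k : Fin n,
          f k • PiTensorProduct.tprod ℂ (fun i => Ψ i (a k i) (x i)) = 0 := by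
        rw [hb', map_sum, LinearMap.sum_apply] at h0
        rw [← h0]
        exact Finset.sum_congr rfl fun k _ => by
          rw [map_smul, LinearMap.smul_apply, hΘ]
      set Λ : (⨂[ℂ] i, H i) →ₗ[ℂ] ℂ :=
        UtAux.phi1 ∘ₗ PiTensorProduct.map
          (fun i => ((innerSL ℂ (y i)).toLinearMap)) with hΛ
      have h2 : ∑ k : Fin n, f k * UtAux.phi1 (PiTensorProduct.tprod ℂ
          (fun i => (⟪y i, Ψ i (a k i) (x i)⟫_ℂ : ℂ))) = 0 := by
        have h3 := congrArg Λ h1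
        rw [map_sum, map_zero] at h3
        rw [← h3]
        refine Finset.sum_congr rfl fun k _ => ?_
        rw [map_smul, hΛ, LinearMap.comp_apply, PiTensorProduct.map_tprod]
        simp [smul_eq_mul]
      rw [← Finset.sum_filter_add_sum_filter_not Finset.univ (fun k => Rel k k₀)] at h2
      have hnotC : ∀ k ∈ Finset.univ.filter (fun k => ¬ Rel k k₀),
          UtAux.phi1 (PiTensorProduct.tprod ℂ
            (fun i => (⟪y i, Ψ i (a k i) (x i)⟫_ℂ : ℂ))) = 0 := by
        intro k hk
        apply UtAux.phi1_tprod_eq_zero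
        have hinf : (D k k₀ \ T).Infinite :=
          Set.Infinite.diff ((Finset.mem_filter.mp hk).2) hT
        apply Set.Infinite.mono _ hinf
        rintro i ⟨hiD, hiT⟩
        have hn1 : ‖Ψ i (a k₀ i) (x0 i)‖ = 1 := by
          rw [hTu k₀ i hiT, hnorm i _ (huu k₀ i), hx01 i]
        have hn2 : ‖Ψ i (a k i) (x0 i)‖ = 1 := by
          rw [hTu k i hiT, hnorm i _ (huu k i), hx01 i]
        simp only [Set.mem_setOf_eq]
        rw [hxx0' i hiT, hyy0' i hiT, hy0]
        intro heq
        exact hx0g i k hiD ((inner_eq_one_iff_of_norm_eq_one hn1 hn2).mp heq)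
      have hC : ∀ k ∈ Finset.univ.filter (fun k => Rel k k₀),
          UtAux.phi1 (PiTensorProduct.tprod ℂ
            (fun i => (⟪y i, Ψ i (a k i) (x i)⟫_ℂ : ℂ)))
            = ∏ i ∈ hT.toFinset, ⟪y i, Ψ i (a k i) (x i)⟫_ℂ := by
        intro k hk
        apply UtAux.phi1_tprod_eq_prod
        intro i hi
        rw [Set.Finite.mem_toFinset] at hi
        have hak : a k i = a k₀ i := hTrel k k₀ (Finset.mem_filter.mp hk).2 i hi
        rw [hxx0' i hi, hyy0' i hi, hy0, hak,
          hinner i _ (by rw [hTu k₀ i hi]; exact huu k₀ i),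
          inner_self_eq_norm_sq_to_K, hx01 i]
        norm_num
      have e1 : ∑ k ∈ Finset.univ.filter (fun k => ¬ Rel k k₀),
          f k * UtAux.phi1 (PiTensorProduct.tprod ℂ
            (fun i => (⟪y i, Ψ i (a k i) (x i)⟫_ℂ : ℂ))) = 0 :=
        Finset.sum_eq_zero fun k hk => by rw [hnotC k hk, mul_zero]
      rw [e1, add_zero] at h2
      rw [← h2]
      exact Finset.sum_congr rfl fun k hk => by rw [hC k hk]
  -- assemble the classes
  set gmap : Fin n → Finset (Fin n) := fun k => Finset.univ.filter (fun l => Rel l k)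
    with hgmap
  have hgself : ∀ k, k ∈ gmap k := fun k =>
    Finset.mem_filter.mpr ⟨Finset.mem_univ k, hRrefl k⟩
  have hgconst : ∀ k l, Rel k l → gmap k = gmap l := by
    intro k l h
    rw [hgmap]
    ext m
    simp only [Finset.mem_filter, Finset.mem_univ, true_and]
    exact ⟨fun hm => hRtrans hm h, fun hm => hRtrans hm (hRsymm h)⟩
  rw [hb', ← Finset.sum_fiberwise_of_maps_to
    (t := (Finset.univ : Finset (Finset (Fin n)))) (g := gmap)
    (fun k _ => Finset.mem_univ (gmap k))]
  apply Finset.sum_eq_zero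
  intro y _
  rcases (Finset.univ.filter (fun k => gmap k = y)).eq_empty_or_nonempty with he | hne
  · rw [he, Finset.sum_empty]
  · obtain ⟨k₁, hk₁⟩ := hne
    have hk₁y : gmap k₁ = y := (Finset.mem_filter.mp hk₁).2
    have hfeq : Finset.univ.filter (fun k => gmap k = y)
        = Finset.univ.filter (fun k => Rel k k₁) := by
      ext m
      simp only [Finset.mem_filter, Finset.mem_univ, true_and]
      constructor
      · intro hm
        have : m ∈ gmap k₁ := by
          rw [hk₁y, ← hm]
          exact hgself m
        exact (Finset.mem_filter.mp this).2
      · intro hm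
        rw [hgconst m k₁ hm, hk₁y]
    rw [hfeq]
    exact class_zero k₁
end

section
/- Let (G_i)_{i∈I} be groups, let (H_i)_{i∈I} be nonzero complex Hilbert spaces, and for each i let π_i : G_i → unitary group of (H_i →L[ℂ] H_i) be a group homomorphism (a unitary representation) such that the induced ℂ-algebra homomorphism MonoidAlgebra ℂ G_i → (H_i →L[ℂ] H_i), sending single g 1 to π_i(g), is injective. Let ρ : MonoidAlgebra ℂ (Π_{i∈I} G_i) → Module.End ℂ (⨂_{i∈I} H_i) be the ℂ-algebra homomorphism determined by ρ(single g 1)(⊗x) = ⊗(π_i(g_i)(x_i)) for g ∈ Π_{i∈I} G_i. If b ∈ MonoidAlgebra ℂ (Π_{i∈I} G_i) satisfies ρ(b)(ξ) = 0 for every ξ ∈ ⨂^un_{i∈I} H_i, then b = 0. -/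
open scoped TensorProduct InnerProductSpace

section Phi
variable {I : Type*} {H : I → Type*} [∀ i, NormedAddCommGroup (H i)]
  [∀ i, InnerProductSpace ℂ (H i)]

open scoped Classical in
noncomputable def phiFun (v x : ∀ i, H i) : ℂ :=
  if h : {i | ⟪v i, x i⟫_ℂ ≠ 1}.Finite then ∏ i ∈ h.toFinset, ⟪v i, x i⟫_ℂ else 0

open scoped Classical in
lemma phiFun_eq_prod (v x : ∀ i, H i) (S : Finset I)
    (hS : ∀ i, ⟪v i, x i⟫_ℂ ≠ 1 → i ∈ S) :
    phiFun v x = ∏ i ∈ S, ⟪v i, x i⟫_ℂ := by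
  have hfin : {i | ⟪v i, x i⟫_ℂ ≠ 1}.Finite := S.finite_toSet.subset hS
  rw [phiFun, dif_pos hfin]
  refine Finset.prod_subset (fun i hi => hS i (by simpa using hi)) ?_
  intro i _ hi
  by_contra h
  exact hi (hfin.mem_toFinset.mpr h)

open scoped Classical in
lemma phiFun_eq_zero (v x : ∀ i, H i)
    (h : {i | ⟪v i, x i⟫_ℂ ≠ 1}.Infinite) : phiFun v x = 0 :=
  dif_neg h

lemma phiFun_update_eq_prod [DecidableEq I] (v x : ∀ i, H i) (i : I) (p : H i)
    (hB : {j | j ≠ i ∧ ⟪v j, x j⟫_ℂ ≠ 1}.Finite) :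
    phiFun v (Function.update x i p)
      = ⟪v i, p⟫_ℂ * ∏ j ∈ hB.toFinset, ⟪v j, x j⟫_ℂ := by
  have hiB : i ∉ hB.toFinset := by simp [Set.Finite.mem_toFinset]
  rw [phiFun_eq_prod v _ (insert i hB.toFinset) ?_, Finset.prod_insert hiB]
  · congr 1
    · simp
    · refine Finset.prod_congr rfl fun j hj => ?_
      have hji : j ≠ i := (hB.mem_toFinset.mp hj).1
      rw [Function.update_of_ne hji]
  · intro j hj
    rcases eq_or_ne j i with rfl | hji
    · exact Finset.mem_insert_self _ _
    · rw [Function.update_of_ne hji] at hj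
      exact Finset.mem_insert_of_mem (hB.mem_toFinset.mpr ⟨hji, hj⟩)

lemma phiFun_update_eq_zero [DecidableEq I] (v x : ∀ i, H i) (i : I) (p : H i)
    (hB : {j | j ≠ i ∧ ⟪v j, x j⟫_ℂ ≠ 1}.Infinite) :
    phiFun v (Function.update x i p) = 0 := by
  refine phiFun_eq_zero v _ (hB.mono ?_)
  intro j hj
  rw [Set.mem_setOf_eq, Function.update_of_ne hj.1]
  exact hj.2

noncomputable def phi (v : ∀ i, H i) : MultilinearMap ℂ H ℂ where
  toFun := phiFun v
  map_update_add' := by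
    intro _ x i p q
    by_cases hB : {j | j ≠ i ∧ ⟪v j, x j⟫_ℂ ≠ 1}.Finite
    · rw [phiFun_update_eq_prod v x i _ hB, phiFun_update_eq_prod v x i _ hB,
        phiFun_update_eq_prod v x i _ hB, inner_add_right, add_mul]
    · rw [phiFun_update_eq_zero v x i _ hB, phiFun_update_eq_zero v x i _ hB,
        phiFun_update_eq_zero v x i _ hB, add_zero]
  map_update_smul' := by
    intro _ x i c p
    by_cases hB : {j | j ≠ i ∧ ⟪v j, x j⟫_ℂ ≠ 1}.Finite
    · rw [phiFun_update_eq_prod v x i _ hB, phiFun_update_eq_prod v x i _ hB,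
        inner_smul_right, smul_eq_mul, mul_assoc]
    · rw [phiFun_update_eq_zero v x i _ hB, phiFun_update_eq_zero v x i _ hB,
        smul_zero]

@[simp] lemma phi_apply (v x : ∀ i, H i) : phi v x = phiFun v x := rfl

end Phi

lemma indep_aux {I : Type*} {G : I → Type*} [∀ i, Group (G i)] {H : I → Type*}
    [∀ i, NormedAddCommGroup (H i)] [∀ i, InnerProductSpace ℂ (H i)] [∀ i, CompleteSpace (H i)]
    (π : ∀ i, G i →* unitary (H i →L[ℂ] H i))
    (πalg : ∀ i, MonoidAlgebra ℂ (G i) →ₐ[ℂ] (H i →L[ℂ] H i))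
    (hπalg : ∀ i (g : G i),
      πalg i (MonoidAlgebra.single g 1) = (π i g : H i →L[ℂ] H i))
    (hπinj : ∀ i, Function.Injective (πalg i))
    (D : Finset I) (K : Finset (∀ i, G i))
    (hK : ∀ g ∈ K, ∀ g' ∈ K, (∀ i ∈ D, g i = g' i) → g = g')
    (c : (∀ i, G i) → ℂ)
    (hc : ∀ u x : ∀ i, H i,
      ∑ g ∈ K, c g * ∏ i ∈ D, ⟪u i, (π i (g i) : H i →L[ℂ] H i) (x i)⟫_ℂ = 0) :
    ∀ g ∈ K, c g = 0 := by
  classical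
  induction D using Finset.induction_on generalizing K c with
  | empty =>
    intro g hg
    have hKg : ∀ g' ∈ K, g' = g := fun g' hg' => hK g' hg' g hg (by simp)
    have hsing : K = {g} := Finset.eq_singleton_iff_unique_mem.mpr ⟨hg, hKg⟩
    have := hc 0 0
    rw [hsing, Finset.sum_singleton, Finset.prod_empty, mul_one] at this
    exact this
  | @insert i₀ D' hi₀ IH =>
    intro g hg
    refine IH (K.filter (fun a => a i₀ = g i₀)) ?_ c ?_ g (Finset.mem_filter.mpr ⟨hg, rfl⟩)
    · intro a ha b hb hab
      obtain ⟨haK, hai⟩ := Finset.mem_filter.mp ha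
      obtain ⟨hbK, hbi⟩ := Finset.mem_filter.mp hb
      refine hK a haK b hbK fun i hi => ?_
      rcases Finset.mem_insert.mp hi with rfl | hi
      · rw [hai, hbi]
      · exact hab i hi
    · intro u x
      set V := K.image (fun a => a i₀) with hV
      set α : G i₀ → ℂ := fun h =>
        ∑ a ∈ K.filter (fun a => a i₀ = h), c a *
          ∏ i ∈ D', ⟪u i, (π i (a i) : H i →L[ℂ] H i) (x i)⟫_ℂ with hα
      have claim1 : ∀ p q : H i₀,
          ∑ h ∈ V, α h * ⟪q, (π i₀ h : H i₀ →L[ℂ] H i₀) p⟫_ℂ = 0 := by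
        intro p q
        have h0 := hc (Function.update u i₀ q) (Function.update x i₀ p)
        have hterm : ∀ a ∈ K,
            c a * ∏ i ∈ insert i₀ D',
              ⟪Function.update u i₀ q i,
                (π i (a i) : H i →L[ℂ] H i) (Function.update x i₀ p i)⟫_ℂ
            = (c a * ∏ i ∈ D', ⟪u i, (π i (a i) : H i →L[ℂ] H i) (x i)⟫_ℂ) *
              ⟪q, (π i₀ (a i₀) : H i₀ →L[ℂ] H i₀) p⟫_ℂ := by
          intro a _
          rw [Finset.prod_insert hi₀, Function.update_self, Function.update_self]
          have : ∀ i ∈ D',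
              ⟪Function.update u i₀ q i,
                (π i (a i) : H i →L[ℂ] H i) (Function.update x i₀ p i)⟫_ℂ
              = ⟪u i, (π i (a i) : H i →L[ℂ] H i) (x i)⟫_ℂ := by
            intro i hi
            have hne : i ≠ i₀ := fun h => hi₀ (h ▸ hi)
            rw [Function.update_of_ne hne, Function.update_of_ne hne]
          rw [Finset.prod_congr rfl this]
          ring
        rw [Finset.sum_congr rfl hterm] at h0
        rw [← Finset.sum_fiberwise_of_maps_to
          (fun a ha => Finset.mem_image_of_mem (fun a => a i₀) ha)] at h0
        refine Eq.trans (Finset.sum_congr rfl fun h hh => ?_) h0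
        rw [hα, Finset.sum_mul]
        refine Finset.sum_congr rfl fun a ha => ?_
        rw [(Finset.mem_filter.mp ha).2]
      set A : H i₀ →L[ℂ] H i₀ := ∑ h ∈ V, α h • (π i₀ h : H i₀ →L[ℂ] H i₀) with hA
      have hinnerA : ∀ p q : H i₀, ⟪q, A p⟫_ℂ = 0 := by
        intro p q
        rw [hA, ContinuousLinearMap.sum_apply, inner_sum]
        rw [← claim1 p q]
        refine Finset.sum_congr rfl fun h hh => ?_
        rw [ContinuousLinearMap.smul_apply, inner_smul_right]
      have hA0 : A = 0 := by
        ext p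
        rw [ContinuousLinearMap.zero_apply, ← inner_self_eq_zero (𝕜 := ℂ)]
        exact hinnerA p (A p)
      have halg : πalg i₀ (∑ h ∈ V, α h • MonoidAlgebra.single h (1 : ℂ)) = 0 := by
        rw [map_sum]
        rw [← hA0, hA]
        refine Finset.sum_congr rfl fun h hh => ?_
        rw [map_smul, hπalg]
      have hsum0 : (∑ h ∈ V, α h • MonoidAlgebra.single h (1 : ℂ)) = 0 :=
        hπinj i₀ (by rw [halg, map_zero])
      have hsum0' : (∑ h ∈ V, α h • Finsupp.single h (1 : ℂ)) = (0 : (G i₀) →₀ ℂ) := by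
        simpa [MonoidAlgebra.coeff_sum, MonoidAlgebra.coeff_smul, MonoidAlgebra.coeff_single]
          using congrArg MonoidAlgebra.coeff hsum0
      have hα0 : α (g i₀) = 0 := by
        have := DFunLike.congr_fun hsum0' (g i₀)
        rw [Finsupp.coe_zero, Pi.zero_apply] at this
        rw [Finsupp.finset_sum_apply] at this
        rw [Finset.sum_eq_single (g i₀)] at this
        · simpa using this
        · intro h hh hne
          simp [Finsupp.smul_single, Finsupp.single_apply, hne]
        · intro hgV
          exact absurd (Finset.mem_image_of_mem _ hg) hgV
      exact hα0

/-- If the unitary representations `π_i` of the groups `G_i` on the Hilbert spaces `H_i`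
induce injective representations of the group algebras `ℂ[G_i]`, then the tensor-type
representation `ρ` of `ℂ[Π_{i∈I} G_i]` on `⨂_{i∈I} H_i` is injective, already when tested
against vectors in `⨂^un_{i∈I} H_i`. -/
theorem monoidAlgebra_pi_representation_injective {I : Type*} [Infinite I]
    (G : I → Type*) [∀ i, Group (G i)]
    (H : I → Type*) [∀ i, NormedAddCommGroup (H i)] [∀ i, InnerProductSpace ℂ (H i)]
    [∀ i, CompleteSpace (H i)] [∀ i, Nontrivial (H i)]
    (π : ∀ i, G i →* unitary (H i →L[ℂ] H i))
    (πalg : ∀ i, MonoidAlgebra ℂ (G i) →ₐ[ℂ] (H i →L[ℂ] H i))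
    (hπalg : ∀ i (g : G i),
      πalg i (MonoidAlgebra.single g 1) = (π i g : H i →L[ℂ] H i))
    (hπinj : ∀ i, Function.Injective (πalg i))
    (ρ : MonoidAlgebra ℂ (∀ i, G i) →ₐ[ℂ] Module.End ℂ (⨂[ℂ] i, H i))
    (hρ : ∀ (g : ∀ i, G i) (x : ∀ i, H i),
      ρ (MonoidAlgebra.single g 1) (PiTensorProduct.tprod ℂ x) =
        PiTensorProduct.tprod ℂ (fun i => (π i (g i) : H i →L[ℂ] H i) (x i)))
    (b : MonoidAlgebra ℂ (∀ i, G i))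
    (hzero : ∀ ξ ∈ unTensorSpan H, ρ b ξ = 0) :
    b = 0 := by
  classical
  by_contra hb
  set c : (∀ i, G i) →₀ ℂ := b.coeff with hc
  have hc0 : c ≠ 0 := fun h => hb (MonoidAlgebra.coeff_eq_zero.mp h)
  obtain ⟨g₀, hg₀⟩ := Finsupp.support_nonempty_iff.mpr hc0
  -- unit vectors
  have he : ∀ i, ∃ v : H i, ‖v‖ = 1 := fun i => exists_norm_eq (H i) zero_le_one
  choose e he1 using he
  -- separating coordinates
  have hsep' : ∀ p : (∀ i, G i) × (∀ i, G i), ∃ i, p.1 ≠ p.2 → p.1 i ≠ p.2 i := by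
    intro p
    by_cases h : p.1 = p.2
    · exact ⟨Classical.arbitrary I, fun hne => absurd h hne⟩
    · obtain ⟨i, hi⟩ := Function.ne_iff.mp h
      exact ⟨i, fun _ => hi⟩
  choose sep hsep using hsep'
  set J : Finset I := (c.support ×ˢ c.support).image sep with hJdef
  have hJ : ∀ g ∈ c.support, ∀ g' ∈ c.support, (∀ i ∈ J, g i = g' i) → g = g' := by
    intro g hg g' hg' hagree
    by_contra hne
    have hmem : sep (g, g') ∈ J :=
      Finset.mem_image_of_mem sep (Finset.mem_product.mpr ⟨hg, hg'⟩)
    exact hsep (g, g') hne (hagree _ hmem)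
  -- difference sets and the sector of g₀
  set E : (∀ i, G i) → Set I := fun g =>
    {i | (π i (g i) : H i →L[ℂ] H i) (e i) ≠ (π i (g₀ i) : H i →L[ℂ] H i) (e i)} with hE
  set S₀ : Finset (∀ i, G i) := c.support.filter (fun g => (E g).Finite) with hS₀
  set D : Finset I := J ∪ S₀.biUnion (fun g => if h : (E g).Finite then h.toFinset else ∅)
    with hD
  have hJD : J ⊆ D := Finset.subset_union_left
  have hED : ∀ g ∈ S₀, ∀ i, i ∉ D →
      (π i (g i) : H i →L[ℂ] H i) (e i) = (π i (g₀ i) : H i →L[ℂ] H i) (e i) := by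
    intro g hg i hiD
    by_contra hne
    have hfin : (E g).Finite := (Finset.mem_filter.mp hg).2
    apply hiD
    refine Finset.mem_union_right _ (Finset.mem_biUnion.mpr ⟨g, hg, ?_⟩)
    rw [dif_pos hfin]
    exact hfin.mem_toFinset.mpr hne
  have hg₀S₀ : g₀ ∈ S₀ := by
    refine Finset.mem_filter.mpr ⟨hg₀, ?_⟩
    have : E g₀ = ∅ := by
      ext i; simp [hE]
    rw [this]
    exact Set.finite_empty
  have hπnorm : ∀ i (g : G i) (w : H i), ‖(π i g : H i →L[ℂ] H i) w‖ = ‖w‖ :=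
    fun i g w => Unitary.norm_map (π i g) w
  -- Step 1: the key identity for unit vectors
  have star_unit : ∀ u x : ∀ i, H i, (∀ i, ‖x i‖ = 1) →
      ∑ g ∈ S₀, c g * ∏ i ∈ D, ⟪u i, (π i (g i) : H i →L[ℂ] H i) (x i)⟫_ℂ = 0 := by
    intro u x hx
    set X : ∀ i, H i := fun i => if i ∈ D then x i else e i with hX
    have hXunit : ∀ i, ‖X i‖ = 1 := by
      intro i
      by_cases h : i ∈ D <;> simp [hX, h, hx, he1]
    have h0 : ρ b (PiTensorProduct.tprod ℂ X) = 0 :=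
      hzero _ (Submodule.subset_span ⟨X, hXunit, rfl⟩)
    set v : ∀ i, H i := fun i =>
      if i ∈ D then u i else (π i (g₀ i) : H i →L[ℂ] H i) (e i) with hv
    have h1 : PiTensorProduct.lift (phi v) (ρ b (PiTensorProduct.tprod ℂ X)) = 0 := by
      rw [h0, map_zero]
    have hbdecomp : b = ∑ g ∈ c.support, (c g) • MonoidAlgebra.single g (1 : ℂ) := by
      have : ∀ g ∈ c.support, (c g) • MonoidAlgebra.single g (1 : ℂ)
          = MonoidAlgebra.single g (c g) := by
        intro g _
        rw [MonoidAlgebra.smul_single', mul_one]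
      rw [Finset.sum_congr rfl this]
      exact (MonoidAlgebra.sum_coeff_single b).symm
    have hbsum : ρ b (PiTensorProduct.tprod ℂ X)
        = ∑ g ∈ c.support, c g •
            PiTensorProduct.tprod ℂ (fun i => (π i (g i) : H i →L[ℂ] H i) (X i)) := by
      conv_lhs => rw [hbdecomp]
      rw [map_sum, LinearMap.sum_apply]
      refine Finset.sum_congr rfl fun g _ => ?_
      rw [map_smul, LinearMap.smul_apply, hρ]
    have h2 : ∑ g ∈ c.support,
        c g * phiFun v (fun i => (π i (g i) : H i →L[ℂ] H i) (X i)) = 0 := by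
      rw [← h1, hbsum, map_sum]
      refine Finset.sum_congr rfl fun g _ => ?_
      rw [map_smul, PiTensorProduct.lift.tprod, phi_apply, smul_eq_mul]
    have hval : ∀ g ∈ c.support,
        phiFun v (fun i => (π i (g i) : H i →L[ℂ] H i) (X i)) =
          if g ∈ S₀ then ∏ i ∈ D, ⟪u i, (π i (g i) : H i →L[ℂ] H i) (x i)⟫_ℂ else 0 := by
      intro g hg
      by_cases hgS : g ∈ S₀
      · rw [if_pos hgS, phiFun_eq_prod v _ D ?_]
        · refine Finset.prod_congr rfl fun i hi => ?_
          rw [hv, hX]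
          simp only [if_pos hi]
        · intro i hi
          by_contra hiD
          apply hi
          have hXe : X i = e i := if_neg hiD
          have hve : v i = (π i (g₀ i) : H i →L[ℂ] H i) (e i) := if_neg hiD
          rw [hXe, hve, hED g hgS i hiD, inner_self_eq_norm_sq_to_K]
          rw [hπnorm, he1]
          norm_num
      · rw [if_neg hgS]
        refine phiFun_eq_zero v _ ?_
        have hEg : (E g).Infinite := by
          intro hfin
          exact hgS (Finset.mem_filter.mpr ⟨hg, hfin⟩)
        refine Set.Infinite.mono ?_ (hEg.diff D.finite_toSet)
        rintro i ⟨hiE, hiD⟩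
        rw [Set.mem_setOf_eq]
        have hiD' : i ∉ D := by simpa using hiD
        have hXe : X i = e i := if_neg hiD'
        have hve : v i = (π i (g₀ i) : H i →L[ℂ] H i) (e i) := if_neg hiD'
        rw [hXe, hve]
        intro h1'
        have heq := (inner_eq_one_iff_of_norm_eq_one (𝕜 := ℂ)
          (by rw [hπnorm, he1]) (by rw [hπnorm, he1])).mp h1'
        exact hiE heq.symm
    rw [Finset.sum_congr rfl (fun g hg => by rw [hval g hg])] at h2
    simp only [mul_ite, mul_zero] at h2
    rw [← Finset.sum_filter] at h2
    have hfilt : c.support.filter (fun g => g ∈ S₀) = S₀ := by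
      ext a
      simp only [Finset.mem_filter, hS₀]
      tauto
    rwa [hfilt] at h2
  -- Step 2: remove the unit-norm constraint
  have star_all : ∀ u x : ∀ i, H i,
      ∑ g ∈ S₀, c g * ∏ i ∈ D, ⟪u i, (π i (g i) : H i →L[ℂ] H i) (x i)⟫_ℂ = 0 := by
    intro u x
    set nx : ∀ i, H i := fun i =>
      if h : x i = 0 then e i else ((‖x i‖ : ℂ))⁻¹ • x i with hnx
    have hnxu : ∀ i, ‖nx i‖ = 1 := by
      intro i
      simp only [hnx]
      by_cases h : x i = 0
      · simp [h, he1]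
      · have hx0 : ‖x i‖ ≠ 0 := norm_ne_zero_iff.mpr h
        rw [dif_neg h, norm_smul, norm_inv, Complex.norm_real, Real.norm_eq_abs, abs_norm,
          inv_mul_cancel₀ hx0]
    have hxi : ∀ i, x i = ((‖x i‖ : ℂ)) • nx i := by
      intro i
      simp only [hnx]
      by_cases h : x i = 0
      · simp [h]
      · rw [dif_neg h, smul_smul, mul_inv_cancel₀
          (Complex.ofReal_ne_zero.mpr (norm_ne_zero_iff.mpr h)), one_smul]
    have hnx0 := star_unit u nx hnxu
    have hterm : ∀ g : ∀ i, G i,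
        ∏ i ∈ D, ⟪u i, (π i (g i) : H i →L[ℂ] H i) (x i)⟫_ℂ
        = (∏ i ∈ D, ((‖x i‖ : ℂ))) *
          ∏ i ∈ D, ⟪u i, (π i (g i) : H i →L[ℂ] H i) (nx i)⟫_ℂ := by
      intro g
      rw [← Finset.prod_mul_distrib]
      refine Finset.prod_congr rfl fun i _ => ?_
      conv_lhs => rw [hxi i]
      rw [map_smul, inner_smul_right]
    calc ∑ g ∈ S₀, c g * ∏ i ∈ D, ⟪u i, (π i (g i) : H i →L[ℂ] H i) (x i)⟫_ℂ
        = (∏ i ∈ D, ((‖x i‖ : ℂ))) * ∑ g ∈ S₀,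
            c g * ∏ i ∈ D, ⟪u i, (π i (g i) : H i →L[ℂ] H i) (nx i)⟫_ℂ := by
          rw [Finset.mul_sum]
          refine Finset.sum_congr rfl fun g _ => ?_
          rw [hterm g]; ring
      _ = 0 := by rw [hnx0, mul_zero]
  -- Step 3: conclude with linear independence
  have hKsep : ∀ g ∈ S₀, ∀ g' ∈ S₀, (∀ i ∈ D, g i = g' i) → g = g' := by
    intro g hg g' hg' hagree
    exact hJ g (Finset.mem_filter.mp hg).1 g' (Finset.mem_filter.mp hg').1
      (fun i hi => hagree i (hJD hi))
  have := indep_aux π πalg hπalg hπinj D S₀ hKsep (fun g => c g) star_all g₀ hg₀S₀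
  exact Finsupp.mem_support_iff.mp hg₀ this
end
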